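/- arXiv:1903.10217 — 7 statements merged into one kernel-verified Lean document; each statement's English description precedes it below -/
import Mathlib

section
/- Let α > 1 be real and let f : [0, π] → ℝ be continuously differentiable with f(0) = 0 and f(π) = 2π. Then π ∫₀^π (2 + f'(r)² + sin(f(r))²/sin(r)²)^α sin(r) dr ≥ 6^α · 2π. -/
open Real MeasureTheory Set intervalIntegral

/-- `sin` is 1-Lipschitz. -/
lemma abs_sin_sub_sin_le' (a b : ℝ) : |Real.sin a - Real.sin b| ≤ |a - b| := by
  rw [Real.sin_sub_sin]
  have h1 : |Real.sin ((a - b) / 2)| ≤ |(a - b) / 2| := Real.abs_sin_le_abs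
  have h2 : |Real.cos ((a + b) / 2)| ≤ 1 := Real.abs_cos_le_one _
  have h3 : |(a - b) / 2| = |a - b| / 2 := by rw [abs_div, abs_two]
  rw [abs_mul, abs_mul, abs_two]
  rw [h3] at h1
  nlinarith [abs_nonneg (Real.sin ((a - b) / 2)), abs_nonneg (Real.cos ((a + b) / 2)),
    abs_nonneg (a - b)]

/-- Tangent line inequality for `t ↦ t^α` at `t = 6`. -/
lemma tangent_rpow_six {α t : ℝ} (hα : 1 ≤ α) (ht : 0 ≤ t) :
    6 ^ α + α * 6 ^ α / 6 * (t - 6) ≤ t ^ α := by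
  have hs : (-1 : ℝ) ≤ t / 6 - 1 := by linarith [div_nonneg ht (by norm_num : (0:ℝ) ≤ 6)]
  have hbern := one_add_mul_self_le_rpow_one_add hs hα
  have h6 : (0:ℝ) < 6 ^ α := Real.rpow_pos_of_pos (by norm_num) α
  have h1 : (1 : ℝ) + (t / 6 - 1) = t / 6 := by ring
  rw [h1] at hbern
  have hdiv : (t / 6) ^ α = t ^ α / 6 ^ α := Real.div_rpow ht (by norm_num : (0:ℝ) ≤ 6) α
  rw [hdiv] at hbern
  have := mul_le_mul_of_nonneg_left hbern h6.le
  calc 6 ^ α + α * 6 ^ α / 6 * (t - 6) = 6 ^ α * (1 + α * (t / 6 - 1)) := by ring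
    _ ≤ 6 ^ α * (t ^ α / 6 ^ α) := this
    _ = t ^ α := by field_simp

/-- Energy lower bound `I_α(f) ≥ 6^α · 2π` for C¹ profiles `f : [0,π] → ℝ` with
`f 0 = 0` and `f π = 2π` (degree-zero co-rotationally symmetric maps). -/
theorem alpha_energy_lower_bound_deg_zero (α : ℝ) (hα : 1 < α) (f f' : ℝ → ℝ)
    (hderiv : ∀ r ∈ Set.Icc (0 : ℝ) π, HasDerivAt f (f' r) r)
    (hcont : ContinuousOn f' (Set.Icc (0 : ℝ) π))
    (h0 : f 0 = 0) (hπ : f π = 2 * π) :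
    (6 : ℝ) ^ α * (2 * π) ≤
      π * ∫ r in (0 : ℝ)..π,
        (2 + f' r ^ 2 + sin (f r) ^ 2 / sin r ^ 2) ^ α * sin r := by
  have hπ0 : (0:ℝ) ≤ π := pi_pos.le
  set G : ℝ → ℝ := fun r => 2 + f' r ^ 2 + sin (f r) ^ 2 / sin r ^ 2 with hGdef
  -- continuity of f on [0, π]
  have hfc : ContinuousOn f (Icc 0 π) := fun r hr =>
    (hderiv r hr).continuousAt.continuousWithinAt
  -- bound on |f'|
  obtain ⟨M, hM⟩ := isCompact_Icc.exists_bound_of_continuousOn hcont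
  have hM' : ∀ r ∈ Icc (0:ℝ) π, |f' r| ≤ M := by simpa [Real.norm_eq_abs] using hM
  have hM0 : 0 ≤ M := le_trans (abs_nonneg _) (hM' 0 ⟨le_refl 0, hπ0⟩)
  -- Lipschitz estimate
  have hlip : ∀ x ∈ Icc (0:ℝ) π, ∀ y ∈ Icc (0:ℝ) π, |f y - f x| ≤ M * |y - x| := by
    intro x hx y hy
    have := Convex.norm_image_sub_le_of_norm_hasDerivWithin_le
      (f := f) (f' := f') (s := Icc 0 π) (C := M)
      (fun r hr => (hderiv r hr).hasDerivWithinAt) hM (convex_Icc 0 π) hx hy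
    simpa [Real.norm_eq_abs] using this
  set C : ℝ := M * π / 2 with hCdef
  have hC0 : 0 ≤ C := by positivity
  -- ratio bound on the open interval
  have hratio : ∀ r ∈ Ioo (0:ℝ) π, sin (f r) ^ 2 / sin r ^ 2 ≤ C ^ 2 := by
    intro r hr
    have hsinpos : 0 < sin r := Real.sin_pos_of_pos_of_lt_pi hr.1 hr.2
    have hrIcc : r ∈ Icc (0:ℝ) π := ⟨hr.1.le, hr.2.le⟩
    rw [div_le_iff₀ (by positivity)]
    rcases le_or_gt r (π/2) with hhalf | hhalf
    · -- near 0
      have hjordan : 2 / π * r ≤ sin r := Real.mul_le_sin hr.1.le hhalf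
      have hlipf : |f r - f 0| ≤ M * r := by
        have := hlip 0 ⟨le_refl 0, hπ0⟩ r hrIcc
        simpa [abs_of_nonneg hr.1.le] using this
      have hsinf : |sin (f r)| ≤ M * r := by
        have h1 : |sin (f r) - sin (f 0)| ≤ |f r - f 0| := abs_sin_sub_sin_le' _ _
        rw [h0, Real.sin_zero, sub_zero, sub_zero] at h1
        rw [h0, sub_zero] at hlipf
        exact h1.trans hlipf
      have h2 : sin (f r) ^ 2 ≤ (M * r) ^ 2 := by
        rw [← sq_abs (sin (f r))]
        exact pow_le_pow_left₀ (abs_nonneg _) hsinf 2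
      have h3 : (2 / π * r) ^ 2 ≤ sin r ^ 2 :=
        pow_le_pow_left₀ (mul_nonneg (by positivity) hr.1.le) hjordan 2
      have h4 : C ^ 2 * (2 / π * r) ^ 2 = (M * r) ^ 2 := by
        rw [hCdef]; field_simp
      calc sin (f r) ^ 2 ≤ (M * r) ^ 2 := h2
        _ = C ^ 2 * (2 / π * r) ^ 2 := h4.symm
        _ ≤ C ^ 2 * sin r ^ 2 := by
            exact mul_le_mul_of_nonneg_left h3 (by positivity)
    · -- near π
      have hsub0 : 0 ≤ π - r := by linarith [hr.2]
      have hsubhalf : π - r ≤ π / 2 := by linarith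
      have hjordan : 2 / π * (π - r) ≤ sin r := by
        have := Real.mul_le_sin hsub0 hsubhalf
        rwa [Real.sin_pi_sub] at this
      have hlipf : |f r - f π| ≤ M * (π - r) := by
        have := hlip π ⟨hπ0, le_refl π⟩ r hrIcc
        rwa [abs_of_nonpos (by linarith [hr.2] : r - π ≤ 0), neg_sub] at this
      have hsinf : |sin (f r)| ≤ M * (π - r) := by
        have h1 : |sin (f r) - sin (f π)| ≤ |f r - f π| := abs_sin_sub_sin_le' _ _
        have hsinfπ : sin (f π) = 0 := by rw [hπ]; simpa using Real.sin_int_mul_pi 2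
        rw [hsinfπ, sub_zero] at h1
        exact h1.trans hlipf
      have h2 : sin (f r) ^ 2 ≤ (M * (π - r)) ^ 2 := by
        rw [← sq_abs (sin (f r))]
        exact pow_le_pow_left₀ (abs_nonneg _) hsinf 2
      have h3 : (2 / π * (π - r)) ^ 2 ≤ sin r ^ 2 :=
        pow_le_pow_left₀ (mul_nonneg (by positivity) hsub0) hjordan 2
      have h4 : C ^ 2 * (2 / π * (π - r)) ^ 2 = (M * (π - r)) ^ 2 := by
        rw [hCdef]; field_simp
      calc sin (f r) ^ 2 ≤ (M * (π - r)) ^ 2 := h2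
        _ = C ^ 2 * (2 / π * (π - r)) ^ 2 := h4.symm
        _ ≤ C ^ 2 * sin r ^ 2 := mul_le_mul_of_nonneg_left h3 (by positivity)
  -- basic bounds on G
  have hG2 : ∀ r, 2 ≤ G r := by
    intro r
    have := sq_nonneg (f' r)
    have h2 : 0 ≤ sin (f r) ^ 2 / sin r ^ 2 := by positivity
    simp only [hGdef]; linarith
  set B : ℝ := 2 + M ^ 2 + C ^ 2 with hBdef
  have hGB : ∀ r ∈ Ioo (0:ℝ) π, G r ≤ B := by
    intro r hr
    have h1 : f' r ^ 2 ≤ M ^ 2 := by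
      rw [← sq_abs (f' r)]
      exact pow_le_pow_left₀ (abs_nonneg _) (hM' r ⟨hr.1.le, hr.2.le⟩) 2
    have h2 := hratio r hr
    simp only [hGdef, hBdef]; linarith
  have hB2 : (2:ℝ) ≤ B := by have := sq_nonneg M; have := sq_nonneg C; simp only [hBdef]; linarith
  -- continuity of G on the open interval
  have hGcont : ContinuousOn G (Ioo 0 π) := by
    apply ContinuousOn.add
    · apply ContinuousOn.add continuousOn_const
      exact (hcont.mono Ioo_subset_Icc_self).pow 2
    · apply ContinuousOn.div
      · exact (Real.continuous_sin.comp_continuousOn (hfc.mono Ioo_subset_Icc_self)).pow 2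
      · exact Real.continuous_sin.continuousOn.pow 2
      · intro x hx
        exact pow_ne_zero _ (ne_of_gt (Real.sin_pos_of_pos_of_lt_pi hx.1 hx.2))
  -- integrability helper
  have inthelper : ∀ (g : ℝ → ℝ) (K : ℝ), ContinuousOn g (Ioo 0 π) →
      (∀ r ∈ Ioo (0:ℝ) π, |g r| ≤ K) → IntervalIntegrable g volume 0 π := by
    intro g K hg hK
    rw [intervalIntegrable_iff_integrableOn_Ioo_of_le hπ0]
    refine ⟨hg.aestronglyMeasurable measurableSet_Ioo, ?_⟩
    apply MeasureTheory.HasFiniteIntegral.restrict_of_bounded (C := K) measure_Ioo_lt_top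
    filter_upwards [MeasureTheory.ae_restrict_mem measurableSet_Ioo] with r hr
    simpa [Real.norm_eq_abs] using hK r hr
  -- integrability of the main integrand
  have hFint : IntervalIntegrable (fun r => G r ^ α * sin r) volume 0 π := by
    apply inthelper _ (B ^ α)
    · apply ContinuousOn.mul _ Real.continuous_sin.continuousOn
      exact hGcont.rpow_const (fun x hx => Or.inl (by linarith [hG2 x]))
    · intro r hr
      have h1 : (0:ℝ) ≤ G r := by linarith [hG2 r]
      have h2 : G r ^ α ≤ B ^ α := Real.rpow_le_rpow h1 (hGB r hr) (by linarith)
      have h3 : 0 ≤ G r ^ α := Real.rpow_nonneg h1 α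
      have h4 : 0 ≤ sin r := Real.sin_nonneg_of_nonneg_of_le_pi hr.1.le hr.2.le
      have h5 : sin r ≤ 1 := Real.sin_le_one r
      rw [abs_of_nonneg (mul_nonneg h3 h4)]
      calc G r ^ α * sin r ≤ B ^ α * 1 := mul_le_mul h2 h5 h4 (Real.rpow_nonneg (by linarith) α)
        _ = B ^ α := mul_one _
  -- integrability of G * sin
  have hGsint : IntervalIntegrable (fun r => G r * sin r) volume 0 π := by
    apply inthelper _ B
    · exact hGcont.mul Real.continuous_sin.continuousOn
    · intro r hr
      have h1 : (0:ℝ) ≤ G r := by linarith [hG2 r]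
      have h4 : 0 ≤ sin r := Real.sin_nonneg_of_nonneg_of_le_pi hr.1.le hr.2.le
      have h5 : sin r ≤ 1 := Real.sin_le_one r
      rw [abs_of_nonneg (mul_nonneg h1 h4)]
      calc G r * sin r ≤ B * 1 := mul_le_mul (hGB r hr) h5 h4 (by linarith)
        _ = B := mul_one _
  -- integrability of |f' * sin (f ·)|
  have hcontprod : ContinuousOn (fun r => f' r * sin (f r)) (Icc 0 π) :=
    hcont.mul (Real.continuous_sin.comp_continuousOn hfc)
  have habsint : IntervalIntegrable (fun r => |f' r * sin (f r)|) volume 0 π := by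
    apply ContinuousOn.intervalIntegrable
    rw [uIcc_of_le hπ0]
    exact hcontprod.abs
  -- sin is integrable
  have hsinint : IntervalIntegrable sin volume 0 π :=
    Real.continuous_sin.intervalIntegrable 0 π
  have hsin2 : (∫ r in (0:ℝ)..π, sin r) = 2 := by
    rw [integral_sin]; norm_num
  -- Step C : total variation bound
  have hTV : (4:ℝ) ≤ ∫ r in (0:ℝ)..π, |f' r * sin (f r)| := by
    -- find c with f c = π
    have hmem : π ∈ Icc (f 0) (f π) := by rw [h0, hπ]; constructor <;> linarith
    obtain ⟨c, hc, hfc'⟩ := intermediate_value_Icc hπ0 hfc hmem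
    have hc0 : (0:ℝ) ≤ c := hc.1
    have hcπ : c ≤ π := hc.2
    -- FTC on [0, c] and [c, π] for cos ∘ f
    have hsub1 : uIcc (0:ℝ) c ⊆ Icc 0 π := by
      rw [uIcc_of_le hc0]; exact Icc_subset_Icc (le_refl 0) hcπ
    have hsub2 : uIcc c π ⊆ Icc 0 π := by
      rw [uIcc_of_le hcπ]; exact Icc_subset_Icc hc0 (le_refl π)
    have hsub1' : uIcc (0:ℝ) c ⊆ uIcc 0 π := by rw [uIcc_of_le hπ0]; exact hsub1
    have hsub2' : uIcc c π ⊆ uIcc 0 π := by rw [uIcc_of_le hπ0]; exact hsub2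
    have hd : ∀ x ∈ Icc (0:ℝ) π, HasDerivAt (fun r => cos (f r)) (-sin (f x) * f' x) x :=
      fun x hx => (hderiv x hx).cos
    have hintc : IntervalIntegrable (fun x => -sin (f x) * f' x) volume 0 π := by
      apply ContinuousOn.intervalIntegrable
      rw [uIcc_of_le hπ0]
      exact ((Real.continuous_sin.comp_continuousOn hfc).neg).mul hcont
    have hftc1 : (∫ x in (0:ℝ)..c, -sin (f x) * f' x) = cos (f c) - cos (f 0) :=
      integral_eq_sub_of_hasDerivAt (fun x hx => hd x (hsub1 hx))
        (hintc.mono_set hsub1')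
    have hftc2 : (∫ x in c..π, -sin (f x) * f' x) = cos (f π) - cos (f c) :=
      integral_eq_sub_of_hasDerivAt (fun x hx => hd x (hsub2 hx))
        (hintc.mono_set hsub2')
    have hval1 : (∫ x in (0:ℝ)..c, -sin (f x) * f' x) = -2 := by
      rw [hftc1, hfc', h0]; norm_num [Real.cos_pi]
    have hval2 : (∫ x in c..π, -sin (f x) * f' x) = 2 := by
      rw [hftc2, hfc', hπ]; norm_num [Real.cos_two_pi, Real.cos_pi]
    have habs_eq : ∀ x, |(-sin (f x) * f' x)| = |f' x * sin (f x)| := by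
      intro x; rw [abs_mul, abs_mul, abs_neg]; ring
    have h1 : (2:ℝ) ≤ ∫ x in (0:ℝ)..c, |f' x * sin (f x)| := by
      have := intervalIntegral.abs_integral_le_integral_abs (μ := volume) (f := fun x => -sin (f x) * f' x) hc0
      rw [hval1] at this
      simp only [habs_eq] at this
      simpa using this
    have h2 : (2:ℝ) ≤ ∫ x in c..π, |f' x * sin (f x)| := by
      have := intervalIntegral.abs_integral_le_integral_abs (μ := volume) (f := fun x => -sin (f x) * f' x) hcπ
      rw [hval2] at this
      simp only [habs_eq] at this
      simpa using this
    have hsplit : (∫ x in (0:ℝ)..c, |f' x * sin (f x)|) + ∫ x in c..π, |f' x * sin (f x)|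
        = ∫ x in (0:ℝ)..π, |f' x * sin (f x)| := by
      apply integral_add_adjacent_intervals
      · exact habsint.mono_set hsub1'
      · exact habsint.mono_set hsub2'
    linarith
  -- Step B : pointwise AM-GM and integral bound for G * sin
  have hGsin_ptwise : ∀ r ∈ Icc (0:ℝ) π,
      2 * sin r + 2 * |f' r * sin (f r)| ≤ G r * sin r := by
    intro r hr
    rcases eq_or_lt_of_le hr.1 with h | hpos
    · -- r = 0
      rw [← h]
      simp [hGdef, h0]
    rcases eq_or_lt_of_le hr.2 with h | hlt
    · -- r = π
      rw [h]
      have : sin (f π) = 0 := by rw [hπ]; simpa using Real.sin_int_mul_pi 2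
      simp [hGdef, this, Real.sin_pi]
    have hs : 0 < sin r := Real.sin_pos_of_pos_of_lt_pi hpos hlt
    have key : 2 * |f' r * sin (f r)| ≤ f' r ^ 2 * sin r + sin (f r) ^ 2 / sin r := by
      have hcomb : f' r ^ 2 * sin r + sin (f r) ^ 2 / sin r
          = (f' r ^ 2 * sin r ^ 2 + sin (f r) ^ 2) / sin r := by
        field_simp
      rw [hcomb, le_div_iff₀ hs, abs_mul]
      nlinarith [sq_nonneg (|f' r| * sin r - |sin (f r)|), sq_abs (f' r), sq_abs (sin (f r)),
        abs_nonneg (f' r), abs_nonneg (sin (f r))]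
    have hdivsin : sin (f r) ^ 2 / sin r ^ 2 * sin r = sin (f r) ^ 2 / sin r := by
      field_simp
    have hexp : G r * sin r = 2 * sin r + f' r ^ 2 * sin r + sin (f r) ^ 2 / sin r := by
      simp only [hGdef]
      rw [add_mul, add_mul, hdivsin]
    rw [hexp]; linarith
  have hGsin_int : (12:ℝ) ≤ ∫ r in (0:ℝ)..π, G r * sin r := by
    have hmono := intervalIntegral.integral_mono_on hπ0
      ((hsinint.const_mul 2).add (habsint.const_mul 2)) hGsint hGsin_ptwise
    have heq : (∫ r in (0:ℝ)..π, (2 * sin r + 2 * |f' r * sin (f r)|))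
        = 2 * (∫ r in (0:ℝ)..π, sin r) + 2 * ∫ r in (0:ℝ)..π, |f' r * sin (f r)| := by
      rw [integral_add (hsinint.const_mul 2) (habsint.const_mul 2),
        intervalIntegral.integral_const_mul, intervalIntegral.integral_const_mul]
    rw [heq, hsin2] at hmono
    linarith
  -- Step A : tangent line and final bound
  have h6pos : (0:ℝ) < 6 ^ α := Real.rpow_pos_of_pos (by norm_num) α
  set c6 : ℝ := α * 6 ^ α / 6 with hc6def
  have hc60 : 0 ≤ c6 := by positivity
  have htan : ∀ r ∈ Icc (0:ℝ) π,
      6 ^ α * sin r + c6 * (G r * sin r) - 6 * c6 * sin r ≤ G r ^ α * sin r := by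
    intro r hr
    have hsin0 : 0 ≤ sin r := Real.sin_nonneg_of_nonneg_of_le_pi hr.1 hr.2
    have h1 : 6 ^ α + c6 * (G r - 6) ≤ G r ^ α := by
      have := tangent_rpow_six hα.le (by linarith [hG2 r] : (0:ℝ) ≤ G r)
      rw [hc6def]; linarith
    have := mul_le_mul_of_nonneg_right h1 hsin0
    nlinarith [this]
  have hLint : IntervalIntegrable
      (fun r => 6 ^ α * sin r + c6 * (G r * sin r) - 6 * c6 * sin r) volume 0 π :=
    ((hsinint.const_mul _).add (hGsint.const_mul _)).sub (hsinint.const_mul _)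
  have hmain := intervalIntegral.integral_mono_on hπ0 hLint hFint htan
  have heqL : (∫ r in (0:ℝ)..π, (6 ^ α * sin r + c6 * (G r * sin r) - 6 * c6 * sin r))
      = 6 ^ α * 2 + c6 * (∫ r in (0:ℝ)..π, G r * sin r) - 6 * c6 * 2 := by
    rw [integral_sub ((hsinint.const_mul _).add (hGsint.const_mul _)) (hsinint.const_mul _),
      integral_add (hsinint.const_mul _) (hGsint.const_mul _),
      intervalIntegral.integral_const_mul, intervalIntegral.integral_const_mul, intervalIntegral.integral_const_mul, hsin2]
  rw [heqL] at hmain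
  have hIF : 2 * 6 ^ α ≤ ∫ r in (0:ℝ)..π, G r ^ α * sin r := by
    nlinarith [mul_le_mul_of_nonneg_left hGsin_int hc60]
  have hfinal := mul_le_mul_of_nonneg_left hIF hπ0
  calc (6:ℝ) ^ α * (2 * π) = π * (2 * 6 ^ α) := by ring
    _ ≤ π * ∫ r in (0:ℝ)..π, G r ^ α * sin r := hfinal
    _ = π * ∫ r in (0:ℝ)..π, (2 + f' r ^ 2 + sin (f r) ^ 2 / sin r ^ 2) ^ α * sin r := rfl
end

section
/- Let α > 1 be real, let k ≥ 1 be an integer, and let f : [0, π] → ℝ be continuously differentiable with f(0) = 0 and f(π) = 2kπ. Then π ∫₀^π (2 + f'(r)² + sin(f(r))²/sin(r)²)^α sin(r) dr ≥ (4k+2)^α · 2π. -/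
open Real

lemma bernoulli_aux {α M x : ℝ} (hα : 1 ≤ α) (hM : 0 < M) (hx : 0 ≤ x) :
    M ^ α + α * M ^ (α - 1) * (x - M) ≤ x ^ α := by
  have hs : (-1 : ℝ) ≤ x / M - 1 := by
    have : 0 ≤ x / M := div_nonneg hx hM.le
    linarith
  have hb := one_add_mul_self_le_rpow_one_add hs hα
  have he : (1 : ℝ) + (x / M - 1) = x / M := by ring
  rw [he] at hb
  have hMα : 0 < M ^ α := rpow_pos_of_pos hM α
  have h1 : (1 + α * (x / M - 1)) * M ^ α ≤ x ^ α := by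
    calc (1 + α * (x / M - 1)) * M ^ α ≤ (x / M) ^ α * M ^ α :=
          mul_le_mul_of_nonneg_right hb hMα.le
      _ = x ^ α := by
          rw [Real.div_rpow hx hM.le]
          field_simp
  have h2 : (1 + α * (x / M - 1)) * M ^ α = M ^ α + α * M ^ (α - 1) * (x - M) := by
    rw [Real.rpow_sub_one hM.ne' α]
    field_simp
  linarith [h2 ▸ h1]

lemma amgm_aux (a b s : ℝ) (hs : 0 < s) : 2 * |a * b| ≤ a ^ 2 * s + b ^ 2 / s := by
  rw [← sub_le_iff_le_add', le_div_iff₀ hs]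
  rcases abs_cases (a * b) with ⟨h1, _⟩ | ⟨h1, _⟩ <;> rw [h1] <;>
    nlinarith [sq_nonneg (a * s - b), sq_nonneg (a * s + b)]

/-- Energy lower bound `I_α(f) ≥ (4k+2)^α · 2π` for C¹ profiles `f : [0,π] → ℝ` with
`f 0 = 0` and `f π = 2kπ`, `k ≥ 1` (degree-zero co-rotationally symmetric maps). -/
theorem alpha_energy_lower_bound_even (α : ℝ) (hα : 1 < α) (k : ℕ) (hk : 1 ≤ k)
    (f f' : ℝ → ℝ)
    (hderiv : ∀ r ∈ Set.Icc (0 : ℝ) π, HasDerivAt f (f' r) r)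
    (hcont : ContinuousOn f' (Set.Icc (0 : ℝ) π))
    (h0 : f 0 = 0) (hπ : f π = 2 * k * π) :
    (4 * (k : ℝ) + 2) ^ α * (2 * π) ≤
      π * ∫ r in (0 : ℝ)..π,
        (2 + f' r ^ 2 + sin (f r) ^ 2 / sin r ^ 2) ^ α * sin r := by
  have hπ0 := pi_pos
  -- continuity of f
  have hfc : ContinuousOn f (Set.Icc (0 : ℝ) π) :=
    fun r hr => (hderiv r hr).continuousAt.continuousWithinAt
  -- sup bound on |f'|
  obtain ⟨c, hcmem, hcmax⟩ :=
    isCompact_Icc.exists_isMaxOn (Set.nonempty_Icc.mpr hπ0.le) hcont.abs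
  set C := |f' c| with hCdef
  have hC0 : 0 ≤ C := abs_nonneg _
  have hC : ∀ r ∈ Set.Icc (0 : ℝ) π, |f' r| ≤ C := fun r hr => hcmax hr
  -- Lipschitz bound on f
  have hlip : ∀ x ∈ Set.Icc (0 : ℝ) π, ∀ y ∈ Set.Icc (0 : ℝ) π,
      |f y - f x| ≤ C * |y - x| := by
    intro x hx y hy
    have := (convex_Icc (0 : ℝ) π).norm_image_sub_le_of_norm_hasDerivWithin_le
      (fun z hz => (hderiv z hz).hasDerivWithinAt) (fun z hz => by simpa using hC z hz) hx hy
    simpa using this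
  -- the profile energy density
  set g : ℝ → ℝ := fun r => 2 + f' r ^ 2 + sin (f r) ^ 2 / sin r ^ 2 with hgdef
  have hgdef' : ∀ r, 2 + f' r ^ 2 + sin (f r) ^ 2 / sin r ^ 2 = g r := fun r => by
    rw [hgdef]
  simp only [hgdef']
  -- basic lower bound g ≥ 2
  have hg2 : ∀ r, 2 ≤ g r := by
    intro r
    rw [← hgdef' r]
    have h1 : 0 ≤ f' r ^ 2 := sq_nonneg _
    have h2 : 0 ≤ sin (f r) ^ 2 / sin r ^ 2 := div_nonneg (sq_nonneg _) (sq_nonneg _)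
    linarith
  -- upper bound B on (0, π)
  set B : ℝ := 2 + C ^ 2 + C ^ 2 * (π / 2) ^ 2 with hBdef
  have hB0 : 0 < B := by positivity
  have hbound : ∀ r ∈ Set.Ioo (0 : ℝ) π, g r ≤ B := by
    intro r hr
    have hr0 : (0 : ℝ) < r := hr.1
    have hrπ : r < π := hr.2
    have hf'2 : f' r ^ 2 ≤ C ^ 2 := by
      have h := hC r (Set.Ioo_subset_Icc_self hr)
      calc f' r ^ 2 = |f' r| ^ 2 := (sq_abs _).symm
        _ ≤ C ^ 2 := pow_le_pow_left₀ (abs_nonneg _) h 2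
    have key : sin (f r) ^ 2 / sin r ^ 2 ≤ C ^ 2 * (π / 2) ^ 2 := by
      obtain ⟨m, hm0, hmhalf, hsinf, hsinr⟩ :
          ∃ m : ℝ, 0 ≤ m ∧ m ≤ π / 2 ∧ |sin (f r)| ≤ C * m ∧ 2 / π * m ≤ sin r := by
        rcases le_or_gt r (π / 2) with h | h
        · refine ⟨r, hr0.le, h, ?_, mul_le_sin hr0.le h⟩
          have h2 := hlip 0 ⟨le_rfl, hπ0.le⟩ r (Set.Ioo_subset_Icc_self hr)
          rw [h0, sub_zero, sub_zero, abs_of_nonneg hr0.le] at h2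
          exact le_trans abs_sin_le_abs h2
        · refine ⟨π - r, by linarith, by linarith, ?_, ?_⟩
          · have h1 : sin (f r) = sin (f r - (k : ℤ) * (2 * π)) :=
              (sin_sub_int_mul_two_pi (f r) k).symm
            have h3 : ((k : ℤ) : ℝ) * (2 * π) = f π := by
              rw [hπ]; push_cast; ring
            have h4 := hlip π ⟨hπ0.le, le_rfl⟩ r (Set.Ioo_subset_Icc_self hr)
            calc |sin (f r)| = |sin (f r - ((k : ℤ) : ℝ) * (2 * π))| := by rw [← h1]
              _ ≤ |f r - ((k : ℤ) : ℝ) * (2 * π)| := abs_sin_le_abs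
              _ = |f r - f π| := by rw [h3]
              _ ≤ C * |r - π| := h4
              _ = C * (π - r) := by rw [abs_sub_comm, abs_of_nonneg (by linarith)]
          · have := mul_le_sin (x := π - r) (by linarith) (by linarith)
            rwa [sin_pi_sub] at this
      have e1 : sin (f r) ^ 2 ≤ (C * m) ^ 2 := by
        rw [← sq_abs (sin (f r))]
        exact pow_le_pow_left₀ (abs_nonneg _) hsinf 2
      have e2 : (2 / π * m) ^ 2 ≤ sin r ^ 2 := pow_le_pow_left₀ (by positivity) hsinr 2
      have hsinr0 : 0 < sin r := sin_pos_of_pos_of_lt_pi hr0 hrπ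
      have hsr2 : 0 < sin r ^ 2 := by positivity
      rw [div_le_iff₀ hsr2]
      calc sin (f r) ^ 2 ≤ (C * m) ^ 2 := e1
        _ = C ^ 2 * (π / 2) ^ 2 * (2 / π * m) ^ 2 := by
            field_simp
        _ ≤ C ^ 2 * (π / 2) ^ 2 * sin r ^ 2 :=
            mul_le_mul_of_nonneg_left e2 (by positivity)
    rw [← hgdef' r, hBdef]
    linarith
  -- continuity of g on (0, π)
  have hg_cont : ContinuousOn g (Set.Ioo (0 : ℝ) π) := by
    have h : ContinuousOn (fun r => 2 + f' r ^ 2 + sin (f r) ^ 2 / sin r ^ 2)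
        (Set.Ioo (0 : ℝ) π) := by
      apply ContinuousOn.add
      · exact continuousOn_const.add ((hcont.mono Set.Ioo_subset_Icc_self).pow 2)
      · exact ((continuous_sin.comp_continuousOn (hfc.mono Set.Ioo_subset_Icc_self)).pow 2).div
          (continuous_sin.continuousOn.pow 2)
          (fun r hr => pow_ne_zero _ (ne_of_gt (sin_pos_of_pos_of_lt_pi hr.1 hr.2)))
    simpa only [hgdef'] using h
  -- integrability of g·sin and g^α·sin
  have hg0 : ∀ r, (0 : ℝ) ≤ g r := fun r => le_trans (by norm_num) (hg2 r)
  have hgsin_int : IntervalIntegrable (fun r => g r * sin r) MeasureTheory.volume 0 π := by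
    rw [intervalIntegrable_iff_integrableOn_Ioo_of_le hπ0.le]
    apply MeasureTheory.Integrable.mono' (g := fun _ => B)
    · exact MeasureTheory.integrableOn_const measure_Ioo_lt_top.ne
    · exact (hg_cont.mul continuous_sin.continuousOn).aestronglyMeasurable measurableSet_Ioo
    · rw [MeasureTheory.ae_restrict_iff' measurableSet_Ioo]
      refine Filter.Eventually.of_forall fun r hr => ?_
      have h2 : 0 ≤ sin r := (sin_pos_of_pos_of_lt_pi hr.1 hr.2).le
      rw [Real.norm_eq_abs, abs_of_nonneg (mul_nonneg (hg0 r) h2)]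
      calc g r * sin r ≤ B * 1 :=
            mul_le_mul (hbound r hr) (sin_le_one r) h2 hB0.le
        _ = B := mul_one _
  have hF_int : IntervalIntegrable (fun r => g r ^ α * sin r) MeasureTheory.volume 0 π := by
    rw [intervalIntegrable_iff_integrableOn_Ioo_of_le hπ0.le]
    apply MeasureTheory.Integrable.mono' (g := fun _ => B ^ α)
    · exact MeasureTheory.integrableOn_const measure_Ioo_lt_top.ne
    · exact ((hg_cont.rpow_const (fun r hr => Or.inl (by linarith [hg2 r]))).mul
        continuous_sin.continuousOn).aestronglyMeasurable measurableSet_Ioo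
    · rw [MeasureTheory.ae_restrict_iff' measurableSet_Ioo]
      refine Filter.Eventually.of_forall fun r hr => ?_
      have h2 : 0 ≤ sin r := (sin_pos_of_pos_of_lt_pi hr.1 hr.2).le
      rw [Real.norm_eq_abs, abs_of_nonneg (mul_nonneg (Real.rpow_nonneg (hg0 r) α) h2)]
      calc g r ^ α * sin r ≤ B ^ α * 1 :=
            mul_le_mul (Real.rpow_le_rpow (hg0 r) (hbound r hr) (by linarith))
              (sin_le_one r) h2 (Real.rpow_nonneg hB0.le α)
        _ = B ^ α := mul_one _
  -- integrability of |f' · sin f|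
  have hφc : ContinuousOn (fun r => |f' r * sin (f r)|) (Set.Icc (0 : ℝ) π) :=
    (hcont.mul (continuous_sin.comp_continuousOn hfc)).abs
  have hφsub : ∀ a b : ℝ, a ∈ Set.Icc (0 : ℝ) π → b ∈ Set.Icc (0 : ℝ) π →
      IntervalIntegrable (fun r => |f' r * sin (f r)|) MeasureTheory.volume a b := by
    intro a b ha hb
    exact (hφc.mono (Set.uIcc_subset_Icc ha hb)).intervalIntegrable
  -- the chain argument: ∫₀^π |f' sin f| ≥ 4k
  have key : ∀ j : ℕ, j ≤ 2 * k → ∃ t ∈ Set.Icc (0 : ℝ) π,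
      f t = (j : ℝ) * π ∧ 2 * (j : ℝ) ≤ ∫ r in (0 : ℝ)..t, |f' r * sin (f r)| := by
    intro j
    induction j with
    | zero =>
      intro _
      exact ⟨0, ⟨le_rfl, hπ0.le⟩, by simp [h0], by simp⟩
    | succ j ih =>
      intro hj
      obtain ⟨t, ht, hft, hA⟩ := ih (le_of_lt (Nat.lt_of_succ_le hj))
      -- IVT on [t, π]
      have hv1 : f t ≤ ((j : ℝ) + 1) * π := by
        rw [hft]; nlinarith
      have hv2 : ((j : ℝ) + 1) * π ≤ f π := by
        rw [hπ]
        have hc : ((j : ℝ) + 1) ≤ 2 * (k : ℝ) := by exact_mod_cast hj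
        nlinarith
      obtain ⟨s, hs, hfs⟩ :=
        (intermediate_value_Icc ht.2 (hfc.mono (Set.Icc_subset_Icc ht.1 le_rfl))) ⟨hv1, hv2⟩
      have hs0π : s ∈ Set.Icc (0 : ℝ) π := ⟨ht.1.trans hs.1, hs.2⟩
      -- derivative of cos ∘ f
      have hd2 : ∀ x ∈ Set.uIcc t s, HasDerivAt (fun y => cos (f y)) (-sin (f x) * f' x) x := by
        intro x hx
        exact (hderiv x (Set.uIcc_subset_Icc ht hs0π hx)).cos
      have hint2 : IntervalIntegrable (fun x => -sin (f x) * f' x) MeasureTheory.volume t s := by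
        apply ContinuousOn.intervalIntegrable
        exact ((continuous_sin.comp_continuousOn
          (hfc.mono (Set.uIcc_subset_Icc ht hs0π))).neg).mul
          (hcont.mono (Set.uIcc_subset_Icc ht hs0π))
      have heq : (∫ x in t..s, -sin (f x) * f' x) = cos (f s) - cos (f t) :=
        intervalIntegral.integral_eq_sub_of_hasDerivAt hd2 hint2
      have habs : |cos (f s) - cos (f t)| = 2 := by
        rw [hfs, hft]
        have he : ((j : ℝ) + 1) * π = (j : ℝ) * π + π := by ring
        rw [he, cos_add_pi]
        have h1 : |cos ((j : ℝ) * π)| = 1 := by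
          have := abs_cos_int_mul_pi (j : ℤ)
          push_cast at this
          exact this
        have h2 : -cos ((j : ℝ) * π) - cos ((j : ℝ) * π) = -(2 * cos ((j : ℝ) * π)) := by ring
        rw [h2, abs_neg, abs_mul, h1]
        norm_num
      have hseg : (2 : ℝ) ≤ ∫ r in t..s, |f' r * sin (f r)| := by
        calc (2 : ℝ) = |cos (f s) - cos (f t)| := habs.symm
          _ = |∫ x in t..s, -sin (f x) * f' x| := by rw [heq]
          _ ≤ ∫ x in t..s, |(-sin (f x) * f' x)| :=
              intervalIntegral.abs_integral_le_integral_abs hs.1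
          _ = ∫ r in t..s, |f' r * sin (f r)| := by
              apply intervalIntegral.integral_congr
              intro x _
              simp [abs_mul, mul_comm]
      have hadd : (∫ r in (0 : ℝ)..t, |f' r * sin (f r)|) +
          (∫ r in t..s, |f' r * sin (f r)|) = ∫ r in (0 : ℝ)..s, |f' r * sin (f r)| :=
        intervalIntegral.integral_add_adjacent_intervals
          (hφsub 0 t ⟨le_rfl, hπ0.le⟩ ht) (hφsub t s ht hs0π)
      refine ⟨s, hs0π, by push_cast; exact hfs, ?_⟩
      push_cast
      linarith
  obtain ⟨t, ht, -, hA⟩ := key (2 * k) le_rfl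
  have hAπ : 4 * (k : ℝ) ≤ ∫ r in (0 : ℝ)..π, |f' r * sin (f r)| := by
    have hadd : (∫ r in (0 : ℝ)..t, |f' r * sin (f r)|) +
        (∫ r in t..π, |f' r * sin (f r)|) = ∫ r in (0 : ℝ)..π, |f' r * sin (f r)| :=
      intervalIntegral.integral_add_adjacent_intervals
        (hφsub 0 t ⟨le_rfl, hπ0.le⟩ ht) (hφsub t π ht ⟨hπ0.le, le_rfl⟩)
    have htπ : (0 : ℝ) ≤ ∫ r in t..π, |f' r * sin (f r)| :=
      intervalIntegral.integral_nonneg ht.2 (fun x _ => abs_nonneg _)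
    push_cast at hA
    linarith
  -- lower bound on J = ∫ g sin
  set J : ℝ := ∫ r in (0 : ℝ)..π, g r * sin r with hJdef
  have h2sin : IntervalIntegrable (fun r => 2 * sin r) MeasureTheory.volume 0 π :=
    (continuous_const.mul continuous_sin).intervalIntegrable 0 π
  have hrest : IntervalIntegrable (fun r => (g r - 2) * sin r) MeasureTheory.volume 0 π := by
    have he : (fun r => (g r - 2) * sin r) = fun r => g r * sin r - 2 * sin r := by
      funext r; ring
    rw [he]
    exact hgsin_int.sub h2sin
  have hBstep : (∫ r in (0 : ℝ)..π, 2 * |f' r * sin (f r)|) ≤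
      ∫ r in (0 : ℝ)..π, (g r - 2) * sin r := by
    apply intervalIntegral.integral_mono_ae_restrict hπ0.le
      ((hφsub 0 π ⟨le_rfl, hπ0.le⟩ ⟨hπ0.le, le_rfl⟩).const_mul 2) hrest
    have hnull : ∀ᵐ r ∂(MeasureTheory.volume.restrict (Set.Icc (0 : ℝ) π)),
        r ∉ ({0, π} : Set ℝ) := by
      apply MeasureTheory.ae_restrict_of_ae
      have h0' : MeasureTheory.volume ({0, π} : Set ℝ) = 0 :=
        Set.Finite.measure_zero (Set.toFinite _) _
      exact (MeasureTheory.measure_eq_zero_iff_ae_notMem).mp h0'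
    have hmem : ∀ᵐ r ∂(MeasureTheory.volume.restrict (Set.Icc (0 : ℝ) π)),
        r ∈ Set.Icc (0 : ℝ) π := MeasureTheory.ae_restrict_mem measurableSet_Icc
    filter_upwards [hnull, hmem] with r hr hrmem
    simp only [Set.mem_insert_iff, Set.mem_singleton_iff, not_or] at hr
    have hr' : r ∈ Set.Ioo (0 : ℝ) π :=
      ⟨lt_of_le_of_ne hrmem.1 (Ne.symm hr.1), lt_of_le_of_ne hrmem.2 hr.2⟩
    have hsin : 0 < sin r := sin_pos_of_pos_of_lt_pi hr'.1 hr'.2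
    have heq2 : (g r - 2) * sin r = f' r ^ 2 * sin r + sin (f r) ^ 2 / sin r := by
      rw [← hgdef' r]
      field_simp
      ring
    rw [heq2]
    exact amgm_aux (f' r) (sin (f r)) (sin r) hsin
  have hJ : 2 * (4 * (k : ℝ) + 2) ≤ J := by
    have hJsplit : J = (∫ r in (0 : ℝ)..π, 2 * sin r) +
        ∫ r in (0 : ℝ)..π, (g r - 2) * sin r := by
      rw [hJdef, ← intervalIntegral.integral_add h2sin hrest]
      apply intervalIntegral.integral_congr
      intro x _
      ring
    have h2sinval : (∫ r in (0 : ℝ)..π, 2 * sin r) = 4 := by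
      rw [intervalIntegral.integral_const_mul, integral_sin]
      norm_num
    have hφ2 : (∫ r in (0 : ℝ)..π, 2 * |f' r * sin (f r)|) =
        2 * ∫ r in (0 : ℝ)..π, |f' r * sin (f r)| :=
      intervalIntegral.integral_const_mul 2 _
    rw [hJsplit, h2sinval]
    rw [hφ2] at hBstep
    linarith
  -- Jensen via Bernoulli tangent line
  have hM0 : 0 < J / 2 := by
    have : (0 : ℝ) < 4 * (k : ℝ) + 2 := by positivity
    linarith
  have hGeq : (fun r => ((J / 2) ^ α + α * (J / 2) ^ (α - 1) * (g r - J / 2)) * sin r)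
      = fun r => ((J / 2) ^ α - α * (J / 2) ^ (α - 1) * (J / 2)) * sin r +
          (α * (J / 2) ^ (α - 1)) * (g r * sin r) := by
    funext r; ring
  have hGint : IntervalIntegrable
      (fun r => ((J / 2) ^ α + α * (J / 2) ^ (α - 1) * (g r - J / 2)) * sin r) MeasureTheory.volume 0 π := by
    rw [hGeq]
    exact ((continuous_sin.intervalIntegrable 0 π).const_mul _).add (hgsin_int.const_mul _)
  have hGval : (∫ r in (0 : ℝ)..π,
      ((J / 2) ^ α + α * (J / 2) ^ (α - 1) * (g r - J / 2)) * sin r) = 2 * (J / 2) ^ α := by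
    rw [hGeq, intervalIntegral.integral_add
      ((continuous_sin.intervalIntegrable 0 π).const_mul _) (hgsin_int.const_mul _),
      intervalIntegral.integral_const_mul, intervalIntegral.integral_const_mul,
      integral_sin, ← hJdef]
    rw [Real.cos_zero, Real.cos_pi]
    ring
  have hpt : ∀ r ∈ Set.Icc (0 : ℝ) π,
      ((J / 2) ^ α + α * (J / 2) ^ (α - 1) * (g r - J / 2)) * sin r ≤ g r ^ α * sin r := by
    intro r hr
    have hsin : 0 ≤ sin r := sin_nonneg_of_nonneg_of_le_pi hr.1 hr.2
    exact mul_le_mul_of_nonneg_right (bernoulli_aux hα.le hM0 (hg0 r)) hsin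
  have hmono := intervalIntegral.integral_mono_on hπ0.le hGint hF_int hpt
  rw [hGval] at hmono
  have h1 : (4 * (k : ℝ) + 2) ^ α ≤ (J / 2) ^ α :=
    Real.rpow_le_rpow (by positivity) (by linarith) (by linarith)
  calc (4 * (k : ℝ) + 2) ^ α * (2 * π) = π * (2 * (4 * (k : ℝ) + 2) ^ α) := by ring
    _ ≤ π * ∫ r in (0 : ℝ)..π, g r ^ α * sin r := by
        apply mul_le_mul_of_nonneg_left _ hπ0.le
        linarith
end

section
/- Let α > 1 be real, let k ≥ 0 be an integer, and let f : [0, π] → ℝ be continuously differentiable with f(0) = 0 and f(π) = (2k+1)π. Then π ∫₀^π (2 + f'(r)² + sin(f(r))²/sin(r)²)^α sin(r) dr ≥ (4k+4)^α · 2π. -/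
open Real intervalIntegral MeasureTheory

section helpers

lemma tangent_rpow {α c x : ℝ} (hα : 1 ≤ α) (hc : 0 < c) (hx : 0 ≤ x) :
    c ^ α + α * c ^ (α - 1) * (x - c) ≤ x ^ α := by
  have hs : (-1 : ℝ) ≤ x / c - 1 := by
    have : 0 ≤ x / c := div_nonneg hx hc.le
    linarith
  have hB := one_add_mul_self_le_rpow_one_add hs hα
  have h1 : 1 + (x / c - 1) = x / c := by ring
  rw [h1, Real.div_rpow hx hc.le] at hB
  have hcα : 0 < c ^ α := Real.rpow_pos_of_pos hc α
  have hc' : c ≠ 0 := ne_of_gt hc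
  have hsub : c ^ (α - 1) = c ^ α / c := by
    rw [Real.rpow_sub hc, Real.rpow_one]
  have h2 := mul_le_mul_of_nonneg_left hB hcα.le
  rw [mul_div_cancel₀ _ (ne_of_gt hcα)] at h2
  have heq : c ^ α + α * (c ^ α / c) * (x - c) = c ^ α * (1 + α * (x / c - 1)) := by
    field_simp
  rw [hsub, heq]
  exact h2

lemma var_lb (f f' : ℝ → ℝ)
    (hderiv : ∀ r ∈ Set.Icc (0 : ℝ) π, HasDerivAt f (f' r) r)
    (hcont : ContinuousOn f' (Set.Icc (0 : ℝ) π)) :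
    ∀ (n j : ℕ) (a b : ℝ), 0 ≤ a → a ≤ b → b ≤ π →
      f a = j * π → f b = (j + n) * π →
      2 * n ≤ ∫ r in a..b, |f' r * sin (f r)| := by
  have hfc : ContinuousOn f (Set.Icc (0 : ℝ) π) := fun r hr =>
    (hderiv r hr).continuousAt.continuousWithinAt
  have hcont2 : ContinuousOn (fun r => f' r * sin (f r)) (Set.Icc (0 : ℝ) π) :=
    hcont.mul (Real.continuous_sin.comp_continuousOn hfc)
  have hII : ∀ a b : ℝ, 0 ≤ a → a ≤ b → b ≤ π →
      IntervalIntegrable (fun r => |f' r * sin (f r)|) MeasureTheory.volume a b := by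
    intro a b ha hab hb
    apply ContinuousOn.intervalIntegrable
    apply (hcont2.mono ?_).abs
    rw [Set.uIcc_of_le hab]
    exact Set.Icc_subset_Icc ha hb
  have hcosπ : ∀ m : ℕ, cos ((m : ℝ) * π) = (-1 : ℝ) ^ m := by
    intro m
    simpa using Real.cos_nat_mul_pi_sub 0 m
  intro n
  induction n with
  | zero =>
    intro j a b ha hab hb hfa hfb
    simpa using intervalIntegral.integral_nonneg hab (fun u _ => abs_nonneg (f' u * sin (f u)))
  | succ n IH =>
    intro j a b ha hab hb hfa hfb
    have hsub : Set.Icc a b ⊆ Set.Icc (0 : ℝ) π := Set.Icc_subset_Icc ha hb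
    have hmem : ((j : ℝ) + 1) * π ∈ Set.Icc (f a) (f b) := by
      rw [hfa, hfb]
      have hpi := Real.pi_pos
      have hn : (0 : ℝ) ≤ n := Nat.cast_nonneg n
      push_cast
      constructor <;> nlinarith
    obtain ⟨c, hc, hfcv⟩ := intermediate_value_Icc hab (hfc.mono hsub) hmem
    have hca : 0 ≤ c := le_trans ha hc.1
    have hcb : c ≤ π := le_trans hc.2 hb
    have hftc : ∫ r in a..c, f' r * sin (f r) = (-cos (f c)) - (-cos (f a)) := by
      apply intervalIntegral.integral_eq_sub_of_hasDerivAt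
      · intro r hr
        rw [Set.uIcc_of_le hc.1] at hr
        have h1 := ((Real.hasDerivAt_cos (f r)).comp r
          (hderiv r (Set.Icc_subset_Icc ha hcb hr))).neg
        convert h1 using 1
        · rfl
        · ring
      · apply ContinuousOn.intervalIntegrable
        apply hcont2.mono
        rw [Set.uIcc_of_le hc.1]
        exact Set.Icc_subset_Icc ha hcb
    have hval : (-cos (f c)) - (-cos (f a)) = 2 * (-1 : ℝ) ^ j := by
      have hfc2 : f c = ((j + 1 : ℕ) : ℝ) * π := by rw [hfcv]; push_cast; ring
      rw [hfc2, hfa, hcosπ, hcosπ, pow_succ]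
      ring
    have h2 : 2 ≤ ∫ r in a..c, |f' r * sin (f r)| := by
      have habs : |∫ r in a..c, f' r * sin (f r)| ≤ ∫ r in a..c, |f' r * sin (f r)| :=
        intervalIntegral.abs_integral_le_integral_abs hc.1
      rw [hftc, hval] at habs
      have h4 : |2 * (-1 : ℝ) ^ j| = 2 := by
        rw [abs_mul, abs_pow, abs_neg, abs_one, one_pow]
        norm_num
      linarith [h4.ge.trans habs]
    have h3 : 2 * (n : ℝ) ≤ ∫ r in c..b, |f' r * sin (f r)| := by
      apply IH (j + 1) c b hca hc.2 hb ?_ ?_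
      · rw [hfcv]; push_cast; ring
      · rw [hfb]; push_cast; ring
    have hsplit := intervalIntegral.integral_add_adjacent_intervals
      (hII a c ha hc.1 hcb) (hII c b hca hc.2 hb)
    push_cast
    rw [← hsplit]
    linarith

end helpers

set_option maxHeartbeats 2000000 in
/-- Energy lower bound `I_α(f) ≥ (4k+4)^α · 2π` for C¹ profiles `f : [0,π] → ℝ` with
`f 0 = 0` and `f π = (2k+1)π`, `k ≥ 0` (degree-one co-rotationally symmetric maps). -/
theorem alpha_energy_lower_bound_odd (α : ℝ) (hα : 1 < α) (k : ℕ)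
    (f f' : ℝ → ℝ)
    (hderiv : ∀ r ∈ Set.Icc (0 : ℝ) π, HasDerivAt f (f' r) r)
    (hcont : ContinuousOn f' (Set.Icc (0 : ℝ) π))
    (h0 : f 0 = 0) (hπ : f π = (2 * k + 1) * π) :
    (4 * (k : ℝ) + 4) ^ α * (2 * π) ≤
      π * ∫ r in (0 : ℝ)..π,
        (2 + f' r ^ 2 + sin (f r) ^ 2 / sin r ^ 2) ^ α * sin r := by
  have hpi := Real.pi_pos
  set c : ℝ := 4 * (k : ℝ) + 4 with hc_def
  have hc : 0 < c := by positivity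
  set q : ℝ → ℝ := fun r => sin (f r) ^ 2 / sin r ^ 2 with hq_def
  set g : ℝ → ℝ := fun r => 2 + f' r ^ 2 + q r with hg_def
  have hfc : ContinuousOn f (Set.Icc (0 : ℝ) π) := fun r hr =>
    (hderiv r hr).continuousAt.continuousWithinAt
  -- bound on f'
  obtain ⟨L₀, hL₀⟩ := (isCompact_Icc (a := (0:ℝ)) (b := π)).exists_bound_of_continuousOn hcont
  set L : ℝ := max L₀ 0 with hL_def
  have hL0 : 0 ≤ L := le_max_right _ _
  have hL : ∀ r ∈ Set.Icc (0 : ℝ) π, |f' r| ≤ L := fun r hr =>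
    (hL₀ r hr).trans (le_max_left _ _)
  -- Lipschitz bound
  have hLip : ∀ x ∈ Set.Icc (0 : ℝ) π, ∀ y ∈ Set.Icc (0 : ℝ) π, |f y - f x| ≤ L * |y - x| := by
    intro x hx y hy
    have := (convex_Icc (0 : ℝ) π).norm_image_sub_le_of_norm_hasDerivWithin_le
      (fun r hr => (hderiv r hr).hasDerivWithinAt) (fun r hr => hL r hr) hx hy
    simpa [Real.norm_eq_abs] using this
  -- bound on q
  set M : ℝ := (L * π) ^ 2 with hM_def
  have hM0 : 0 ≤ M := sq_nonneg _
  have hq_nonneg : ∀ r, 0 ≤ q r := fun r => div_nonneg (sq_nonneg _) (sq_nonneg _)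
  have hq_bd : ∀ r ∈ Set.Icc (0 : ℝ) π, q r ≤ M := by
    intro r hr
    rcases eq_or_lt_of_le hr.1 with h0r | h0r
    · simp only [hq_def, ← h0r, h0, Real.sin_zero]
      norm_num
      exact hM0
    rcases eq_or_lt_of_le hr.2 with hrπ | hrπ
    · simp only [hq_def, hrπ, Real.sin_pi]
      norm_num
      exact hM0
    -- interior
    have hsinr : 0 < sin r := Real.sin_pos_of_pos_of_lt_pi h0r hrπ
    -- choose t
    rcases le_or_gt r (π / 2) with hhalf | hhalf
    · -- t = r
      have hsin : 2 / π * r ≤ sin r := Real.mul_le_sin h0r.le hhalf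
      have habs : |sin (f r)| ≤ L * r := by
        calc |sin (f r)| ≤ |f r| := Real.abs_sin_le_abs
          _ = |f r - f 0| := by rw [h0, sub_zero]
          _ ≤ L * |r - 0| := hLip 0 ⟨le_refl 0, hpi.le⟩ r hr
          _ = L * r := by rw [sub_zero, abs_of_nonneg h0r.le]
      have h1 : sin (f r) ^ 2 ≤ (L * r) ^ 2 := by
        have := pow_le_pow_left₀ (abs_nonneg (sin (f r))) habs 2
        rwa [sq_abs] at this
      have h2 : (2 / π * r) ^ 2 ≤ sin r ^ 2 := by
        apply pow_le_pow_left₀ (by positivity) hsin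
      rw [hq_def]
      rw [div_le_iff₀ (by positivity : (0:ℝ) < sin r ^ 2)]
      calc sin (f r) ^ 2 ≤ (L * r) ^ 2 := h1
        _ ≤ M * (2 / π * r) ^ 2 := by
            have hπne : π ≠ 0 := ne_of_gt hpi
            have he : M * (2 / π * r) ^ 2 = 4 * (L * r) ^ 2 := by
              rw [hM_def]; field_simp; ring
            rw [he]; nlinarith [sq_nonneg (L * r)]
        _ ≤ M * sin r ^ 2 := mul_le_mul_of_nonneg_left h2 hM0
    · -- t = π - r
      have ht0 : 0 < π - r := by linarith
      have hsin : 2 / π * (π - r) ≤ sin r := by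
        rw [← Real.sin_pi_sub]
        exact Real.mul_le_sin ht0.le (by linarith)
      have hsf : |sin (f r)| = |sin (f π - f r)| := by
        have : f π - f r = ((2 * k + 1) * π - f r) := by rw [hπ]
        rw [this]
        have h2 : (2 * (k:ℝ) + 1) * π - f r = (π - f r) + k * (2 * π) := by ring
        rw [h2, Real.sin_add_nat_mul_two_pi, Real.sin_pi_sub]
      have habs : |sin (f r)| ≤ L * (π - r) := by
        calc |sin (f r)| = |sin (f π - f r)| := hsf
          _ ≤ |f π - f r| := Real.abs_sin_le_abs
          _ ≤ L * |π - r| := hLip r hr π ⟨hpi.le, le_refl π⟩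
          _ = L * (π - r) := by rw [abs_of_nonneg ht0.le]
      have h1 : sin (f r) ^ 2 ≤ (L * (π - r)) ^ 2 := by
        have := pow_le_pow_left₀ (abs_nonneg (sin (f r))) habs 2
        rwa [sq_abs] at this
      have h2 : (2 / π * (π - r)) ^ 2 ≤ sin r ^ 2 := by
        apply pow_le_pow_left₀ (by positivity) hsin
      rw [hq_def]
      rw [div_le_iff₀ (by positivity : (0:ℝ) < sin r ^ 2)]
      calc sin (f r) ^ 2 ≤ (L * (π - r)) ^ 2 := h1
        _ ≤ M * (2 / π * (π - r)) ^ 2 := by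
            have hπne : π ≠ 0 := ne_of_gt hpi
            have he : M * (2 / π * (π - r)) ^ 2 = 4 * (L * (π - r)) ^ 2 := by
              rw [hM_def]; field_simp; ring
            rw [he]; nlinarith [sq_nonneg (L * (π - r))]
        _ ≤ M * sin r ^ 2 := mul_le_mul_of_nonneg_left h2 hM0

  have hg0 : ∀ r, (0:ℝ) ≤ g r := by
    intro r
    simp only [hg_def]
    nlinarith [hq_nonneg r, sq_nonneg (f' r)]
  have hf'sq : ∀ r ∈ Set.Icc (0:ℝ) π, f' r ^ 2 ≤ L ^ 2 := by
    intro r hr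
    nlinarith [sq_abs (f' r), hL r hr, abs_nonneg (f' r), hL0]
  set B : ℝ := 2 + L ^ 2 + M with hB_def
  have hB0 : (0:ℝ) ≤ B := by positivity
  have hgB : ∀ r ∈ Set.Icc (0:ℝ) π, g r ≤ B := by
    intro r hr
    simp only [hg_def, hB_def]
    have := hf'sq r hr
    have := hq_bd r hr
    linarith
  -- continuity on the open interval
  have hqc : ContinuousOn q (Set.Ioo (0:ℝ) π) := by
    apply ContinuousOn.div
    · exact (Real.continuous_sin.comp_continuousOn (hfc.mono Set.Ioo_subset_Icc_self)).pow 2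
    · exact (Real.continuous_sin.continuousOn).pow 2
    · intro r hr
      have : 0 < sin r := Real.sin_pos_of_pos_of_lt_pi hr.1 hr.2
      positivity
  have hgc : ContinuousOn g (Set.Ioo (0:ℝ) π) :=
    (continuousOn_const.add ((hcont.mono Set.Ioo_subset_Icc_self).pow 2)).add hqc
  -- integrability helper
  have hIH : ∀ (F : ℝ → ℝ) (C : ℝ), ContinuousOn F (Set.Ioo (0:ℝ) π) →
      (∀ r ∈ Set.Ioo (0:ℝ) π, |F r| ≤ C) →
      IntervalIntegrable F MeasureTheory.volume 0 π := by
    intro F C hFc hFb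
    rw [intervalIntegrable_iff_integrableOn_Ioo_of_le hpi.le]
    refine ⟨hFc.aestronglyMeasurable measurableSet_Ioo, ?_⟩
    apply MeasureTheory.HasFiniteIntegral.restrict_of_bounded (C := C)
    · rw [Real.volume_Ioo]; exact ENNReal.ofReal_lt_top
    · filter_upwards [MeasureTheory.ae_restrict_mem measurableSet_Ioo] with r hr
      simpa [Real.norm_eq_abs] using hFb r hr
  have habs_sin : ∀ r : ℝ, |sin r| ≤ 1 := fun r =>
    abs_le.mpr ⟨Real.neg_one_le_sin r, Real.sin_le_one r⟩
  have hIgs : IntervalIntegrable (fun r => g r * sin r) MeasureTheory.volume 0 π := by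
    apply hIH _ B (hgc.mul Real.continuous_sin.continuousOn)
    intro r hr
    have hrI := Set.Ioo_subset_Icc_self hr
    rw [Pi.mul_apply, abs_mul, abs_of_nonneg (hg0 r)]
    nlinarith [hgB r hrI, hg0 r, abs_nonneg (sin r), habs_sin r]
  have hIG : IntervalIntegrable (fun r => g r ^ α * sin r) MeasureTheory.volume 0 π := by
    apply hIH _ (B ^ α)
    · exact (hgc.rpow_const (fun r hr => Or.inr (by linarith))).mul
        Real.continuous_sin.continuousOn
    · intro r hr
      have hrI := Set.Ioo_subset_Icc_self hr
      rw [abs_mul, abs_of_nonneg (Real.rpow_nonneg (hg0 r) α)]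
      have h1 : g r ^ α ≤ B ^ α := Real.rpow_le_rpow (hg0 r) (hgB r hrI) (by linarith)
      nlinarith [Real.rpow_nonneg (hg0 r) α, habs_sin r, abs_nonneg (sin r)]
  have hIq : IntervalIntegrable (fun r => (f' r ^ 2 + q r) * sin r) MeasureTheory.volume 0 π := by
    apply hIH _ (L ^ 2 + M)
    · exact (((hcont.mono Set.Ioo_subset_Icc_self).pow 2).add hqc).mul
        Real.continuous_sin.continuousOn
    · intro r hr
      have hrI := Set.Ioo_subset_Icc_self hr
      have h1 : 0 ≤ f' r ^ 2 + q r := by nlinarith [sq_nonneg (f' r), hq_nonneg r]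
      rw [abs_mul, abs_of_nonneg h1]
      nlinarith [hf'sq r hrI, hq_bd r hrI, habs_sin r, abs_nonneg (sin r)]
  have hIsin : IntervalIntegrable (fun r => 2 * sin r) MeasureTheory.volume 0 π :=
    (Real.continuous_sin.const_smul (2:ℝ)).intervalIntegrable 0 π
  have hIabs : IntervalIntegrable (fun r => 2 * |f' r * sin (f r)|) MeasureTheory.volume 0 π := by
    apply ContinuousOn.intervalIntegrable
    rw [Set.uIcc_of_le hpi.le]
    exact continuousOn_const.mul
      ((hcont.mul (Real.continuous_sin.comp_continuousOn hfc)).abs)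
  -- total variation bound
  have hvar : 2 * ((2 * k + 1 : ℕ) : ℝ) ≤ ∫ r in (0:ℝ)..π, |f' r * sin (f r)| := by
    apply var_lb f f' hderiv hcont (2 * k + 1) 0 0 π le_rfl hpi.le le_rfl
    · rw [h0]; norm_num
    · rw [hπ]; push_cast; ring
  have hsinfπ : sin (f π) = 0 := by
    rw [hπ]
    have h2 : (2 * (k:ℝ) + 1) * π = π + k * (2 * π) := by ring
    rw [h2, Real.sin_add_nat_mul_two_pi, Real.sin_pi]
  -- pointwise AM-GM and monotonicity
  have hstep3a : ∫ r in (0:ℝ)..π, 2 * |f' r * sin (f r)| ≤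
      ∫ r in (0:ℝ)..π, (f' r ^ 2 + q r) * sin r := by
    apply intervalIntegral.integral_mono_on hpi.le hIabs hIq
    intro r hr
    rcases eq_or_lt_of_le hr.1 with h0r | h0r
    · rw [← h0r]; simp [h0]
    rcases eq_or_lt_of_le hr.2 with hrπ | hrπ
    · rw [hrπ]; simp [hsinfπ, Real.sin_pi]
    have hs : 0 < sin r := Real.sin_pos_of_pos_of_lt_pi h0r hrπ
    have h1 : 2 * |f' r * sin (f r)| * sin r ≤ f' r ^ 2 * sin r ^ 2 + sin (f r) ^ 2 := by
      nlinarith [sq_nonneg (|f' r| * sin r - |sin (f r)|), abs_mul (f' r) (sin (f r)),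
        sq_abs (f' r), sq_abs (sin (f r)), abs_nonneg (f' r), abs_nonneg (sin (f r)), hs]
    have h2 : (f' r ^ 2 + q r) * sin r - 2 * |f' r * sin (f r)| =
        (f' r ^ 2 * sin r ^ 2 + sin (f r) ^ 2 - 2 * |f' r * sin (f r)| * sin r) / sin r := by
      simp only [hq_def]
      field_simp
    have h3 : 0 ≤ (f' r ^ 2 * sin r ^ 2 + sin (f r) ^ 2 -
        2 * |f' r * sin (f r)| * sin r) / sin r := div_nonneg (by linarith) hs.le
    rw [← h2] at h3
    linarith
  -- split the linear integral
  have hsin_int : ∫ r in (0:ℝ)..π, sin r = 2 := by norm_num [integral_sin]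
  have hgsin_eq : ∫ r in (0:ℝ)..π, g r * sin r =
      (∫ r in (0:ℝ)..π, 2 * sin r) + ∫ r in (0:ℝ)..π, (f' r ^ 2 + q r) * sin r := by
    rw [← intervalIntegral.integral_add hIsin hIq]
    apply intervalIntegral.integral_congr
    intro r hr
    simp only [hg_def]
    ring
  have h2sin : ∫ r in (0:ℝ)..π, 2 * sin r = 4 := by
    rw [intervalIntegral.integral_const_mul, hsin_int]; norm_num
  have habs_eq : ∫ r in (0:ℝ)..π, 2 * |f' r * sin (f r)| =
      2 * ∫ r in (0:ℝ)..π, |f' r * sin (f r)| := intervalIntegral.integral_const_mul _ _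
  have hgsin_lb : 2 * c ≤ ∫ r in (0:ℝ)..π, g r * sin r := by
    rw [hgsin_eq, h2sin]
    rw [habs_eq] at hstep3a
    push_cast at hvar
    rw [hc_def]
    linarith
  -- tangent line comparison
  have hmono : ∫ r in (0:ℝ)..π,
      ((c ^ α - α * c ^ (α - 1) * c) * sin r + (α * c ^ (α - 1)) * (g r * sin r)) ≤
      ∫ r in (0:ℝ)..π, g r ^ α * sin r := by
    apply intervalIntegral.integral_mono_on hpi.le ?_ hIG
    · intro r hr
      have hsr : 0 ≤ sin r := Real.sin_nonneg_of_nonneg_of_le_pi hr.1 hr.2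
      have ht := tangent_rpow hα.le hc (hg0 r)
      nlinarith [mul_le_mul_of_nonneg_right ht hsr]
    · exact ((Real.continuous_sin.intervalIntegrable 0 π).const_mul _).add
        (hIgs.const_mul _)
  have hleft : ∫ r in (0:ℝ)..π,
      ((c ^ α - α * c ^ (α - 1) * c) * sin r + (α * c ^ (α - 1)) * (g r * sin r)) =
      (c ^ α - α * c ^ (α - 1) * c) * 2 + (α * c ^ (α - 1)) * ∫ r in (0:ℝ)..π, g r * sin r := by
    rw [intervalIntegral.integral_add
      ((Real.continuous_sin.intervalIntegrable 0 π).const_mul _) (hIgs.const_mul _),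
      intervalIntegral.integral_const_mul, intervalIntegral.integral_const_mul, hsin_int]
  have hcpow : c ^ (α - 1) * c = c ^ α := by
    have h1 : α - 1 + 1 = α := by ring
    rw [← h1, Real.rpow_add_one (ne_of_gt hc), h1]
  have hαc : 0 ≤ α * c ^ (α - 1) := mul_nonneg (by linarith) (Real.rpow_nonneg hc.le _)
  have hfin : 2 * c ^ α ≤ ∫ r in (0:ℝ)..π, g r ^ α * sin r := by
    have h5 := mul_le_mul_of_nonneg_left hgsin_lb hαc
    rw [hleft] at hmono
    nlinarith [hcpow]
  have hintG : ∫ r in (0:ℝ)..π, g r ^ α * sin r =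
      ∫ r in (0:ℝ)..π, (2 + f' r ^ 2 + sin (f r) ^ 2 / sin r ^ 2) ^ α * sin r := rfl
  rw [← hintG]
  nlinarith [mul_le_mul_of_nonneg_left hfin hpi.le]
end

section
/- Let λ > 0, let f(r) = 2 arctan(λ tan(r)) for r ∈ (0, π/2). Then for every r ∈ (0, π/2), (1/2)(f'(r)² + sin(f(r))²/sin(r)²) = 2λ²(1 + cos(r)²) / (λ² − (λ² − 1)cos(r)²)². -/
open Real

/-- Formula (3.4): the energy density of the comparison map with profile
`f(r) = 2 arctan(λ tan r)` equals `2λ²(1 + cos² r) / (λ² − (λ² − 1)cos² r)²`. -/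
theorem energy_density_formula (l : ℝ) (hl : 0 < l) (r : ℝ)
    (hr : r ∈ Set.Ioo (0 : ℝ) (π / 2)) :
    (1 / 2) * ((deriv (fun s => 2 * arctan (l * tan s)) r) ^ 2
        + sin (2 * arctan (l * tan r)) ^ 2 / sin r ^ 2)
      = 2 * l ^ 2 * (1 + cos r ^ 2) / (l ^ 2 - (l ^ 2 - 1) * cos r ^ 2) ^ 2 := by
  obtain ⟨hr0, hr2⟩ := hr
  have hcos : 0 < cos r := Real.cos_pos_of_mem_Ioo ⟨by linarith [Real.pi_pos], hr2⟩
  have hsin : 0 < sin r := Real.sin_pos_of_pos_of_lt_pi hr0 (by linarith [Real.pi_pos])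
  have hcos' : cos r ≠ 0 := ne_of_gt hcos
  have hsin' : sin r ≠ 0 := ne_of_gt hsin
  have h1 : (0:ℝ) < 1 + (l * tan r) ^ 2 := by positivity
  have hpyth : sin r ^ 2 = 1 - cos r ^ 2 := by
    have := Real.sin_sq_add_cos_sq r; linarith
  have hD : l ^ 2 - (l ^ 2 - 1) * cos r ^ 2 ≠ 0 := by
    nlinarith [sq_nonneg (sin r), sq_nonneg (cos r), sq_nonneg l, hl, hpyth]
  -- derivative
  have hd : HasDerivAt (fun s => 2 * arctan (l * tan s))
      (2 * ((1 / (1 + (l * tan r) ^ 2)) * (l * (1 / cos r ^ 2)))) r := by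
    have htan : HasDerivAt tan (1 / cos r ^ 2) r := Real.hasDerivAt_tan hcos'
    have h2 : HasDerivAt (fun s => l * tan s) (l * (1 / cos r ^ 2)) r := htan.const_mul l
    have h3 : HasDerivAt (fun s => arctan (l * tan s))
        ((1 / (1 + (l * tan r) ^ 2)) * (l * (1 / cos r ^ 2))) r :=
      by have := (Real.hasDerivAt_arctan (l * tan r)).comp r h2; exact this
    exact h3.const_mul 2
  rw [hd.deriv]
  -- sin of double arctan
  have hs : sin (2 * arctan (l * tan r)) = 2 * (l * tan r) / (1 + (l * tan r) ^ 2) := by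
    rw [Real.sin_two_mul, Real.sin_arctan, Real.cos_arctan]
    have hA : √(1 + (l * tan r) ^ 2) * √(1 + (l * tan r) ^ 2) = 1 + (l * tan r) ^ 2 :=
      Real.mul_self_sqrt h1.le
    rw [show 2 * (l * tan r / √(1 + (l * tan r) ^ 2)) * (1 / √(1 + (l * tan r) ^ 2))
        = 2 * (l * tan r) / (√(1 + (l * tan r) ^ 2) * √(1 + (l * tan r) ^ 2)) by ring, hA]
  rw [hs, Real.tan_eq_sin_div_cos]
  have hA2 : 1 + (l * (sin r / cos r)) ^ 2
      = (l ^ 2 - (l ^ 2 - 1) * cos r ^ 2) / cos r ^ 2 := by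
    field_simp
    linear_combination l ^ 2 * hpyth
  rw [hA2]
  field_simp
end

section
/- Let λ > 1 and define e(r) = 2λ²(1 + cos(r)²) / (λ² − (λ² − 1)cos(r)²)² for r ∈ [0, π/2]. Then ∫₀^{π/2} e(r) sin(r) dr < 2λ²/(λ² − 1). -/
open Real

/-- Estimate (3.12): for `λ > 1` the energy density
`e(r) = 2λ²(1 + cos² r)/(λ² − (λ² − 1)cos² r)²` satisfies
`∫₀^{π/2} e(r) sin r dr < 2λ²/(λ² − 1)`. -/
theorem first_order_energy_estimate (l : ℝ) (hl : 1 < l) :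
    (∫ r in (0 : ℝ)..(π / 2),
        (2 * l ^ 2 * (1 + cos r ^ 2) / (l ^ 2 - (l ^ 2 - 1) * cos r ^ 2) ^ 2) * sin r)
      < 2 * l ^ 2 / (l ^ 2 - 1) := by
  have hb : (0:ℝ) < l ^ 2 - 1 := by nlinarith
  have hl0 : (0:ℝ) < l := by linarith
  set s : ℝ := Real.sqrt (l ^ 2 - 1) with hs_def
  have hs2 : s ^ 2 = l ^ 2 - 1 := Real.sq_sqrt hb.le
  have hs : 0 < s := Real.sqrt_pos.2 hb
  have hsl : s < l := by nlinarith
  have hD : ∀ r : ℝ, 1 ≤ l ^ 2 - (l ^ 2 - 1) * cos r ^ 2 := by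
    intro r
    nlinarith [Real.cos_sq_le_one r, hb]
  have hN : ∀ r : ℝ, 0 < l + s * cos r := by
    intro r
    nlinarith [Real.neg_one_le_cos r, hs, hsl]
  have hP : ∀ r : ℝ, 0 < l - s * cos r := by
    intro r
    nlinarith [Real.cos_le_one r, hs, hsl]
  set F : ℝ → ℝ := fun r =>
    (-(2 * l ^ 2 - 1) / (l ^ 2 - 1)) * cos r / (l ^ 2 - (l ^ 2 - 1) * cos r ^ 2)
      + (1 / (2 * l * (l ^ 2 - 1) * s)) *
        (Real.log (l + s * cos r) - Real.log (l - s * cos r)) with hF_def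
  have hF : ∀ r : ℝ, HasDerivAt F
      ((2 * l ^ 2 * (1 + cos r ^ 2) / (l ^ 2 - (l ^ 2 - 1) * cos r ^ 2) ^ 2) * sin r) r := by
    intro r
    have hc := Real.hasDerivAt_cos r
    have hc2 : HasDerivAt (fun x => cos x ^ 2) (2 * cos r * -sin r) r := by
      simpa [pow_one, mul_comm] using hc.fun_pow 2
    have hDder : HasDerivAt (fun x => l ^ 2 - (l ^ 2 - 1) * cos x ^ 2)
        (-((l ^ 2 - 1) * (2 * cos r * -sin r))) r :=
      ((hc2.const_mul (l ^ 2 - 1)).const_sub (l ^ 2))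
    have hnum : HasDerivAt (fun x => (-(2 * l ^ 2 - 1) / (l ^ 2 - 1)) * cos x)
        ((-(2 * l ^ 2 - 1) / (l ^ 2 - 1)) * -sin r) r := hc.const_mul _
    have hDne : l ^ 2 - (l ^ 2 - 1) * cos r ^ 2 ≠ 0 := by nlinarith [hD r]
    have hQ := hnum.div hDder hDne
    have hlogN : HasDerivAt (fun x => Real.log (l + s * cos x))
        ((s * -sin r) / (l + s * cos r)) r :=
      (((hc.const_mul s).const_add l)).log (hN r).ne'
    have hlogP : HasDerivAt (fun x => Real.log (l - s * cos x))
        ((-(s * -sin r)) / (l - s * cos r)) r :=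
      (((hc.const_mul s).const_sub l)).log (hP r).ne'
    have hTot := hQ.add (((hlogN.sub hlogP)).const_mul (1 / (2 * l * (l ^ 2 - 1) * s)))
    refine hTot.congr_deriv ?_
    symm
    have hNne := (hN r).ne'
    have hPne := (hP r).ne'
    have hbne : l ^ 2 - 1 ≠ 0 := hb.ne'
    have hsne : s ≠ 0 := hs.ne'
    have hlne : l ≠ 0 := hl0.ne'
    have hDfac : l ^ 2 - (l ^ 2 - 1) * cos r ^ 2 = (l + s * cos r) * (l - s * cos r) := by
      linear_combination cos r ^ 2 * hs2
    have hlogpart : 1 / (2 * l * (l ^ 2 - 1) * s) * (s * -sin r / (l + s * cos r) - -(s * -sin r) / (l - s * cos r))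
        = -sin r / ((l ^ 2 - 1) * (l ^ 2 - (l ^ 2 - 1) * cos r ^ 2)) := by
      rw [hDfac]
      field_simp
      ring
    rw [hlogpart]
    field_simp
    ring
  have hcont : Continuous (fun r : ℝ =>
      (2 * l ^ 2 * (1 + cos r ^ 2) / (l ^ 2 - (l ^ 2 - 1) * cos r ^ 2) ^ 2) * sin r) := by
    apply Continuous.mul _ continuous_sin
    apply Continuous.div (by continuity) (by continuity)
    intro x
    have := hD x
    positivity
  rw [intervalIntegral.integral_eq_sub_of_hasDerivAt (fun r _ => hF r)
    (hcont.intervalIntegrable _ _)]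
  have hlog : Real.log (l - s) < Real.log (l + s) :=
    Real.log_lt_log (by linarith) (by linarith)
  have hM : 0 < 1 / (2 * l * (l ^ 2 - 1) * s) := by positivity
  have hpos : 0 < (1 / (2 * l * (l ^ 2 - 1) * s)) *
      (Real.log (l + s) - Real.log (l - s)) := mul_pos hM (by linarith)
  have hF0 : F 0 = -((2 * l ^ 2 - 1) / (l ^ 2 - 1))
      + (1 / (2 * l * (l ^ 2 - 1) * s)) * (Real.log (l + s) - Real.log (l - s)) := by
    simp only [hF_def, Real.cos_zero, one_pow, mul_one]
    rw [show l ^ 2 - (l ^ 2 - 1) = (1:ℝ) by ring]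
    ring
  have hFpi : F (π / 2) = 0 := by
    simp [hF_def, Real.cos_pi_div_two]
  rw [hF0, hFpi]
  have h1 : (2 * l ^ 2 - 1) / (l ^ 2 - 1) < 2 * l ^ 2 / (l ^ 2 - 1) := by
    gcongr
    · linarith
  linarith [hpos, h1]
end

section
/- Let λ > 0 with λ² > 2 and define e(r) = 2λ²(1 + cos(r)²) / (λ² − (λ² − 1)cos(r)²)² for r ∈ [0, π/2]. Then ∫₀^{π/2} e(r)² sin(r) dr < 128 λ². -/
set_option maxHeartbeats 1000000


open Real

/-- Estimate (3.13): for `λ > 0` with `λ² > 2`, the energy density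
`e(r) = 2λ²(1 + cos² r)/(λ² − (λ² − 1)cos² r)²` satisfies
`∫₀^{π/2} e(r)² sin r dr < 128 λ²`. -/
theorem second_order_energy_estimate (l : ℝ) (hl : 0 < l) (hl2 : 2 < l ^ 2) :
    (∫ r in (0 : ℝ)..(π / 2),
        (2 * l ^ 2 * (1 + cos r ^ 2) / (l ^ 2 - (l ^ 2 - 1) * cos r ^ 2) ^ 2) ^ 2 * sin r)
      < 128 * l ^ 2 := by
  have hl2pos : (0:ℝ) < l ^ 2 := by positivity
  set a : ℝ := Real.sqrt (1 - 1 / l ^ 2) with ha_def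
  have h1l2 : 1 / l ^ 2 < 1 / 2 := by
    rw [div_lt_div_iff₀ hl2pos (by norm_num)]; linarith
  have h1l2pos : 0 < 1 / l ^ 2 := by positivity
  have hnn : (0:ℝ) < 1 - 1 / l ^ 2 := by linarith
  have ha2 : a ^ 2 = 1 - 1 / l ^ 2 := Real.sq_sqrt hnn.le
  have hapos : 0 < a := Real.sqrt_pos.mpr hnn
  have ha1 : a < 1 := by nlinarith [ha2]
  have ha3 : 1 / 3 < a := by nlinarith [ha2]
  have hla : (l ^ 2 - 1) = l ^ 2 * a ^ 2 := by
    rw [ha2]; field_simp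
  -- positivity of denominators
  have hDpos : ∀ r : ℝ, 0 < l ^ 2 - (l ^ 2 - 1) * cos r ^ 2 := by
    intro r
    nlinarith [Real.cos_sq_le_one r, sq_nonneg (cos r)]
  have hacr : ∀ r : ℝ, 0 < 1 - a * cos r := by
    intro r
    have := mul_le_mul_of_nonneg_left (Real.cos_le_one r) hapos.le
    linarith
  -- continuity / integrability
  have hcont1 : Continuous fun r : ℝ =>
      (2 * l ^ 2 * (1 + cos r ^ 2) / (l ^ 2 - (l ^ 2 - 1) * cos r ^ 2) ^ 2) ^ 2 * sin r := by
    apply Continuous.mul _ Real.continuous_sin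
    apply Continuous.pow
    apply Continuous.div (by continuity) (by continuity)
    intro r
    exact pow_ne_zero 2 (hDpos r).ne'
  have hcont2 : Continuous fun r : ℝ => 16 * sin r / (l ^ 4 * (1 - a * cos r) ^ 4) := by
    apply Continuous.div (by continuity) (by continuity)
    intro r
    have := hacr r
    positivity
  have hint1 : IntervalIntegrable
      (fun r : ℝ =>
        (2 * l ^ 2 * (1 + cos r ^ 2) / (l ^ 2 - (l ^ 2 - 1) * cos r ^ 2) ^ 2) ^ 2 * sin r)
      MeasureTheory.volume 0 (π / 2) := hcont1.intervalIntegrable _ _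
  have hint2 : IntervalIntegrable (fun r : ℝ => 16 * sin r / (l ^ 4 * (1 - a * cos r) ^ 4))
      MeasureTheory.volume 0 (π / 2) := hcont2.intervalIntegrable _ _
  have hpi : (0:ℝ) ≤ π / 2 := by positivity
  -- pointwise comparison on [0, π/2]
  have hmono : ∀ r ∈ Set.Icc (0:ℝ) (π / 2),
      (2 * l ^ 2 * (1 + cos r ^ 2) / (l ^ 2 - (l ^ 2 - 1) * cos r ^ 2) ^ 2) ^ 2 * sin r
        ≤ 16 * sin r / (l ^ 4 * (1 - a * cos r) ^ 4) := by
    intro r hr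
    obtain ⟨hr0, hr1⟩ := hr
    have hc0 : 0 ≤ cos r := Real.cos_nonneg_of_mem_Icc ⟨by linarith [Real.pi_pos], hr1⟩
    have hc1 : cos r ≤ 1 := Real.cos_le_one r
    have hs0 : 0 ≤ sin r := Real.sin_nonneg_of_nonneg_of_le_pi hr0
      (by linarith [Real.pi_pos])
    set c := cos r with hc_def
    have h1ac : 0 < 1 - a * c := hacr r
    have hDfac : l ^ 2 - (l ^ 2 - 1) * c ^ 2 = l ^ 2 * ((1 - a * c) * (1 + a * c)) := by
      rw [hla]; ring
    have hkey : l ^ 2 * (1 - a * c) ≤ l ^ 2 - (l ^ 2 - 1) * c ^ 2 := by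
      rw [hDfac]
      nlinarith [mul_nonneg hapos.le hc0]
    have hDP : 0 < l ^ 2 * (1 - a * c) := by positivity
    have hnum : 2 * l ^ 2 * (1 + c ^ 2) ≤ 4 * l ^ 2 := by nlinarith
    have step1 : 2 * l ^ 2 * (1 + c ^ 2) / (l ^ 2 - (l ^ 2 - 1) * c ^ 2) ^ 2
        ≤ 4 * l ^ 2 / (l ^ 2 * (1 - a * c)) ^ 2 :=
      div_le_div₀ (by positivity) hnum (by positivity)
        (pow_le_pow_left₀ hDP.le hkey 2)
    have step2 : (2 * l ^ 2 * (1 + c ^ 2) / (l ^ 2 - (l ^ 2 - 1) * c ^ 2) ^ 2) ^ 2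
        ≤ 16 / (l ^ 4 * (1 - a * c) ^ 4) := by
      calc (2 * l ^ 2 * (1 + c ^ 2) / (l ^ 2 - (l ^ 2 - 1) * c ^ 2) ^ 2) ^ 2
          ≤ (4 * l ^ 2 / (l ^ 2 * (1 - a * c)) ^ 2) ^ 2 := by
            apply pow_le_pow_left₀ _ step1 2
            positivity
        _ = 16 / (l ^ 4 * (1 - a * c) ^ 4) := by
            field_simp
            ring
    calc (2 * l ^ 2 * (1 + c ^ 2) / (l ^ 2 - (l ^ 2 - 1) * c ^ 2) ^ 2) ^ 2 * sin r
        ≤ 16 / (l ^ 4 * (1 - a * c) ^ 4) * sin r :=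
          mul_le_mul_of_nonneg_right step2 hs0
      _ = 16 * sin r / (l ^ 4 * (1 - a * c) ^ 4) := by ring
  have hle := intervalIntegral.integral_mono_on hpi hint1 hint2 hmono
  -- FTC for the majorant
  have hftc : (∫ r in (0:ℝ)..(π / 2), 16 * sin r / (l ^ 4 * (1 - a * cos r) ^ 4))
      = (-16 / (3 * a * l ^ 4) * ((1 - a * cos (π / 2)) ^ 3)⁻¹)
        - (-16 / (3 * a * l ^ 4) * ((1 - a * cos 0) ^ 3)⁻¹) := by
    have h := intervalIntegral.integral_eq_sub_of_hasDerivAt (a := 0) (b := π / 2)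
      (f := fun r => -16 / (3 * a * l ^ 4) * ((1 - a * cos r) ^ 3)⁻¹)
      (f' := fun r => 16 * sin r / (l ^ 4 * (1 - a * cos r) ^ 4)) ?_ hint2
    · exact h
    · intro r hr
      have hu : HasDerivAt (fun r : ℝ => 1 - a * cos r) (a * sin r) r := by
        have := ((Real.hasDerivAt_cos r).const_mul a).const_sub 1
        refine this.congr_deriv ?_
        ring
      have hu3 : HasDerivAt (fun r : ℝ => (1 - a * cos r) ^ 3)
          (3 * (1 - a * cos r) ^ 2 * (a * sin r)) r := by
        have h3 := hu.pow 3
        exact h3.congr_deriv (by push_cast; ring)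
      have hne : (1 - a * cos r) ^ 3 ≠ 0 := by
        have := hacr r; positivity
      have hinv := hu3.inv hne
      have := hinv.const_mul (-16 / (3 * a * l ^ 4))
      refine this.congr_deriv ?_
      have h0 := hacr r
      field_simp
  rw [Real.cos_pi_div_two, Real.cos_zero] at hftc
  -- evaluate and bound the resulting number
  have hinva : (1 - a)⁻¹ = l ^ 2 * (1 + a) := by
    have hmul : (1 - a) * (l ^ 2 * (1 + a)) = 1 := by
      have : l ^ 2 * (1 - a ^ 2) = 1 := by
        rw [ha2]; field_simp; ring
      nlinarith [this]
    exact inv_eq_of_mul_eq_one_right hmul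
  have hval : (-16 / (3 * a * l ^ 4) * ((1 - a * 0) ^ 3)⁻¹)
      - (-16 / (3 * a * l ^ 4) * ((1 - a * 1) ^ 3)⁻¹)
      = (16 * (l ^ 2 * (1 + a)) ^ 3 - 16) / (3 * a * l ^ 4) := by
    have h1a : (0:ℝ) < 1 - a := by linarith
    have : ((1 - a) ^ 3)⁻¹ = (l ^ 2 * (1 + a)) ^ 3 := by
      rw [← inv_pow, hinva]
    rw [show (1 : ℝ) - a * 1 = 1 - a by ring, this]
    field_simp
    ring
  have h24 : (1 + a) ^ 3 < 24 * a := by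
    nlinarith [mul_pos (sub_pos.mpr ha3) (sub_pos.mpr ha1),
      mul_pos (mul_pos (sub_pos.mpr ha3) (sub_pos.mpr ha1)) hapos]
  have hfin : (16 * (l ^ 2 * (1 + a)) ^ 3 - 16) / (3 * a * l ^ 4) < 128 * l ^ 2 := by
    rw [div_lt_iff₀ (by positivity)]
    have hl6 : (0:ℝ) < l ^ 6 := by positivity
    nlinarith [mul_lt_mul_of_pos_left h24 (show (0:ℝ) < 16 * l ^ 6 by positivity)]
  calc (∫ r in (0 : ℝ)..(π / 2),
        (2 * l ^ 2 * (1 + cos r ^ 2) / (l ^ 2 - (l ^ 2 - 1) * cos r ^ 2) ^ 2) ^ 2 * sin r)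
      ≤ ∫ r in (0:ℝ)..(π / 2), 16 * sin r / (l ^ 4 * (1 - a * cos r) ^ 4) := hle
    _ = (-16 / (3 * a * l ^ 4) * ((1 - a * 0) ^ 3)⁻¹)
        - (-16 / (3 * a * l ^ 4) * ((1 - a * 1) ^ 3)⁻¹) := hftc
    _ = (16 * (l ^ 2 * (1 + a)) ^ 3 - 16) / (3 * a * l ^ 4) := hval
    _ < 128 * l ^ 2 := hfin
end

section
/- There exists a universal constant C > 0 such that for every real α with 1 < α < 5/4, setting λ = (α − 1)^{−1/4} and e(r) = 2λ²(1 + cos(r)²) / (λ² − (λ² − 1)cos(r)²)², one has 2^α π ∫₀^π (1 + e(r))^α sin(r) dr < 6^α · 2π + C (α − 1)^{1/2}. -/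
open Real

set_option maxHeartbeats 2000000 in
/-- Proposition 3.1: there is a universal constant `C > 0` such that for `1 < α < 5/4`,
with `λ = (α − 1)^(−1/4)` and energy density
`e(r) = 2λ²(1 + cos² r)/(λ² − (λ² − 1)cos² r)²`, the α-energy
`2^α π ∫₀^π (1 + e(r))^α sin r dr` is less than `6^α · 2π + C(α − 1)^(1/2)`. -/
theorem upper_bound_comparison_map :
    ∃ C > (0 : ℝ), ∀ α : ℝ, 1 < α → α < 5 / 4 →
      ∀ l : ℝ, l = (α - 1) ^ (-(1 / 4) : ℝ) →
        (2 : ℝ) ^ α * π * (∫ r in (0 : ℝ)..π,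
            (1 + 2 * l ^ 2 * (1 + cos r ^ 2) /
              (l ^ 2 - (l ^ 2 - 1) * cos r ^ 2) ^ 2) ^ α * sin r)
          < (6 : ℝ) ^ α * (2 * π) + C * (α - 1) ^ ((1 : ℝ) / 2) := by
  refine ⟨3000, by norm_num, fun α hα1 hα2 l hl => ?_⟩
  have hε0 : (0:ℝ) < α - 1 := by linarith
  have hε4 : α - 1 < 1/4 := by linarith
  have hs0 : 0 < (α - 1) ^ ((1:ℝ)/2) := rpow_pos_of_pos hε0 _
  set s := (α - 1) ^ ((1:ℝ)/2) with hsdef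
  have hs2 : s ^ 2 = α - 1 := by
    rw [hsdef, ← rpow_natCast ((α-1) ^ ((1:ℝ)/2)) 2, ← rpow_mul hε0.le]; norm_num
  have hl2 : l ^ 2 = (α - 1) ^ (-(1/2) : ℝ) := by
    rw [hl, ← rpow_natCast ((α-1) ^ (-(1/4):ℝ)) 2, ← rpow_mul hε0.le]; norm_num
  have hls : l ^ 2 * s = 1 := by
    rw [hl2, hsdef, ← rpow_add hε0]; norm_num
  have hshalf : s < 1/2 := by nlinarith
  have hl2two : 2 < l ^ 2 := by nlinarith
  have hk0 : (0:ℝ) < l ^ 2 - 1 := by linarith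
  -- positivity of the denominator
  have hQ1 : ∀ r : ℝ, 1 ≤ l ^ 2 - (l ^ 2 - 1) * cos r ^ 2 := by
    intro r
    have h1 : cos r ^ 2 ≤ 1 := cos_sq_le_one r
    nlinarith
  have hQ0 : ∀ r : ℝ, (0:ℝ) < l ^ 2 - (l ^ 2 - 1) * cos r ^ 2 :=
    fun r => lt_of_lt_of_le one_pos (hQ1 r)
  have hQne : ∀ r : ℝ, l ^ 2 - (l ^ 2 - 1) * cos r ^ 2 ≠ 0 := fun r => (hQ0 r).ne'
  -- bounds on the energy density
  have hE0 : ∀ r : ℝ, 0 ≤ 2 * l ^ 2 * (1 + cos r ^ 2) / (l ^ 2 - (l ^ 2 - 1) * cos r ^ 2) ^ 2 := by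
    intro r
    apply div_nonneg
    · nlinarith [sq_nonneg (cos r)]
    · exact (pow_pos (hQ0 r) 2).le
  have hEle : ∀ r : ℝ, 2 * l ^ 2 * (1 + cos r ^ 2) / (l ^ 2 - (l ^ 2 - 1) * cos r ^ 2) ^ 2
      ≤ 4 * l ^ 2 := by
    intro r
    rw [div_le_iff₀ (pow_pos (hQ0 r) 2)]
    have h1 : cos r ^ 2 ≤ 1 := cos_sq_le_one r
    have h2 : 1 ≤ (l ^ 2 - (l ^ 2 - 1) * cos r ^ 2) ^ 2 := by nlinarith [hQ1 r]
    nlinarith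
  -- the comparison density bound: E ≤ P'
  have hEP : ∀ r : ℝ, 2 * l ^ 2 * (1 + cos r ^ 2) / (l ^ 2 - (l ^ 2 - 1) * cos r ^ 2) ^ 2
      ≤ (2 * l ^ 2 - 1) * (l ^ 2 + (l ^ 2 - 1) * cos r ^ 2) /
        ((l ^ 2 - 1) * (l ^ 2 - (l ^ 2 - 1) * cos r ^ 2) ^ 2) := by
    intro r
    have hdiff : (2 * l ^ 2 - 1) * (l ^ 2 + (l ^ 2 - 1) * cos r ^ 2) /
          ((l ^ 2 - 1) * (l ^ 2 - (l ^ 2 - 1) * cos r ^ 2) ^ 2)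
        - 2 * l ^ 2 * (1 + cos r ^ 2) / (l ^ 2 - (l ^ 2 - 1) * cos r ^ 2) ^ 2
        = 1 / ((l ^ 2 - 1) * (l ^ 2 - (l ^ 2 - 1) * cos r ^ 2)) := by
      field_simp [hk0.ne', hQne r]
      ring
    have hpos : 0 < 1 / ((l ^ 2 - 1) * (l ^ 2 - (l ^ 2 - 1) * cos r ^ 2)) :=
      one_div_pos.mpr (mul_pos hk0 (hQ0 r))
    linarith
  -- pointwise bound on the integrand
  set A := (1 + 4 * l ^ 2) ^ (α - 1) with hAdef
  have hA0 : 0 < A := rpow_pos_of_pos (by positivity) _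
  have hpt : ∀ r ∈ Set.Icc (0:ℝ) π,
      (1 + 2 * l ^ 2 * (1 + cos r ^ 2) / (l ^ 2 - (l ^ 2 - 1) * cos r ^ 2) ^ 2) ^ α * sin r
      ≤ A * ((1 + (2 * l ^ 2 - 1) * (l ^ 2 + (l ^ 2 - 1) * cos r ^ 2) /
          ((l ^ 2 - 1) * (l ^ 2 - (l ^ 2 - 1) * cos r ^ 2) ^ 2)) * sin r) := by
    intro r hr
    have hsin : 0 ≤ sin r := sin_nonneg_of_nonneg_of_le_pi hr.1 hr.2
    have hbase : (0:ℝ) < 1 + 2 * l ^ 2 * (1 + cos r ^ 2) / (l ^ 2 - (l ^ 2 - 1) * cos r ^ 2) ^ 2 := by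
      linarith [hE0 r]
    have hsplit : (1 + 2 * l ^ 2 * (1 + cos r ^ 2) / (l ^ 2 - (l ^ 2 - 1) * cos r ^ 2) ^ 2) ^ α
        = (1 + 2 * l ^ 2 * (1 + cos r ^ 2) / (l ^ 2 - (l ^ 2 - 1) * cos r ^ 2) ^ 2) ^ (α - 1)
          * (1 + 2 * l ^ 2 * (1 + cos r ^ 2) / (l ^ 2 - (l ^ 2 - 1) * cos r ^ 2) ^ 2) := by
      have h := (Real.rpow_add hbase (α - 1) 1).symm
      rw [rpow_one] at h
      rw [show α - 1 + 1 = α by ring] at h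
      exact h.symm
    have hmono : (1 + 2 * l ^ 2 * (1 + cos r ^ 2) / (l ^ 2 - (l ^ 2 - 1) * cos r ^ 2) ^ 2) ^ (α - 1)
        ≤ A := by
      apply rpow_le_rpow hbase.le _ (by linarith)
      linarith [hEle r]
    calc (1 + 2 * l ^ 2 * (1 + cos r ^ 2) / (l ^ 2 - (l ^ 2 - 1) * cos r ^ 2) ^ 2) ^ α * sin r
        = ((1 + 2 * l ^ 2 * (1 + cos r ^ 2) / (l ^ 2 - (l ^ 2 - 1) * cos r ^ 2) ^ 2) ^ (α - 1)
          * (1 + 2 * l ^ 2 * (1 + cos r ^ 2) / (l ^ 2 - (l ^ 2 - 1) * cos r ^ 2) ^ 2)) * sin r := by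
          rw [hsplit]
      _ ≤ (A * (1 + (2 * l ^ 2 - 1) * (l ^ 2 + (l ^ 2 - 1) * cos r ^ 2) /
          ((l ^ 2 - 1) * (l ^ 2 - (l ^ 2 - 1) * cos r ^ 2) ^ 2))) * sin r := by
          apply mul_le_mul_of_nonneg_right _ hsin
          apply mul_le_mul hmono _ hbase.le hA0.le
          linarith [hEP r]
      _ = A * ((1 + (2 * l ^ 2 - 1) * (l ^ 2 + (l ^ 2 - 1) * cos r ^ 2) /
          ((l ^ 2 - 1) * (l ^ 2 - (l ^ 2 - 1) * cos r ^ 2) ^ 2)) * sin r) := by ring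
  -- continuity / integrability
  have hfcont : Continuous (fun r : ℝ =>
      (1 + 2 * l ^ 2 * (1 + cos r ^ 2) / (l ^ 2 - (l ^ 2 - 1) * cos r ^ 2) ^ 2) ^ α * sin r) := by
    apply Continuous.mul _ continuous_sin
    apply Continuous.rpow_const
    · exact continuous_const.add (Continuous.div (by fun_prop) (by fun_prop)
        (fun r => pow_ne_zero 2 (hQne r)))
    · intro r
      exact Or.inl (ne_of_gt (by nlinarith [hE0 r]))
  have hgcont : Continuous (fun r : ℝ =>
      (1 + (2 * l ^ 2 - 1) * (l ^ 2 + (l ^ 2 - 1) * cos r ^ 2) /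
        ((l ^ 2 - 1) * (l ^ 2 - (l ^ 2 - 1) * cos r ^ 2) ^ 2)) * sin r) := by
    apply Continuous.mul _ continuous_sin
    exact continuous_const.add (Continuous.div (by fun_prop) (by fun_prop)
        (fun r => mul_ne_zero hk0.ne' (pow_ne_zero 2 (hQne r))))
  -- FTC for the comparison integrand
  have hF : ∀ r : ℝ, HasDerivAt
      (fun x => -cos x - (2 * l ^ 2 - 1) * cos x / ((l ^ 2 - 1) * (l ^ 2 - (l ^ 2 - 1) * cos x ^ 2)))
      ((1 + (2 * l ^ 2 - 1) * (l ^ 2 + (l ^ 2 - 1) * cos r ^ 2) /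
        ((l ^ 2 - 1) * (l ^ 2 - (l ^ 2 - 1) * cos r ^ 2) ^ 2)) * sin r) r := by
    intro r
    have hc := Real.hasDerivAt_cos r
    have hcos2 : HasDerivAt (fun x : ℝ => cos x ^ 2) (2 * cos r ^ 1 * -sin r) r := hc.pow 2
    have hden : HasDerivAt (fun x : ℝ => (l ^ 2 - 1) * (l ^ 2 - (l ^ 2 - 1) * cos x ^ 2))
        ((l ^ 2 - 1) * (0 - (l ^ 2 - 1) * (2 * cos r ^ 1 * -sin r))) r :=
      ((hasDerivAt_const r (l ^ 2)).sub (hcos2.const_mul (l ^ 2 - 1))).const_mul (l ^ 2 - 1)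
    have hnum : HasDerivAt (fun x : ℝ => (2 * l ^ 2 - 1) * cos x) ((2 * l ^ 2 - 1) * -sin r) r :=
      hc.const_mul _
    have hdiv := hnum.div hden (mul_ne_zero hk0.ne' (hQne r))
    have htot := hc.neg.sub hdiv
    convert htot using 1
    case e'_4 => rfl
    case e'_5 => rfl
    case e'_8 => rfl
    field_simp [hk0.ne', hQne r]
    ring
  have hgval : (∫ r in (0:ℝ)..π,
      (1 + (2 * l ^ 2 - 1) * (l ^ 2 + (l ^ 2 - 1) * cos r ^ 2) /
        ((l ^ 2 - 1) * (l ^ 2 - (l ^ 2 - 1) * cos r ^ 2) ^ 2)) * sin r)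
      = 2 + 2 * (2 * l ^ 2 - 1) / (l ^ 2 - 1) := by
    rw [intervalIntegral.integral_eq_sub_of_hasDerivAt (fun r _ => hF r)
      (hgcont.intervalIntegrable 0 π)]
    simp only [Real.cos_pi, Real.cos_zero]
    rw [show l ^ 2 - (l ^ 2 - 1) * (-1:ℝ) ^ 2 = 1 by ring,
        show l ^ 2 - (l ^ 2 - 1) * (1:ℝ) ^ 2 = 1 by ring]
    field_simp
    ring
  -- the integral comparison
  have hIle : (∫ r in (0:ℝ)..π,
      (1 + 2 * l ^ 2 * (1 + cos r ^ 2) / (l ^ 2 - (l ^ 2 - 1) * cos r ^ 2) ^ 2) ^ α * sin r)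
      ≤ A * (2 + 2 * (2 * l ^ 2 - 1) / (l ^ 2 - 1)) := by
    calc (∫ r in (0:ℝ)..π,
        (1 + 2 * l ^ 2 * (1 + cos r ^ 2) / (l ^ 2 - (l ^ 2 - 1) * cos r ^ 2) ^ 2) ^ α * sin r)
        ≤ ∫ r in (0:ℝ)..π, A * ((1 + (2 * l ^ 2 - 1) * (l ^ 2 + (l ^ 2 - 1) * cos r ^ 2) /
            ((l ^ 2 - 1) * (l ^ 2 - (l ^ 2 - 1) * cos r ^ 2) ^ 2)) * sin r) :=
          intervalIntegral.integral_mono_on pi_pos.le (hfcont.intervalIntegrable 0 π)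
            ((continuous_const.mul hgcont).intervalIntegrable 0 π) hpt
      _ = A * ∫ r in (0:ℝ)..π, (1 + (2 * l ^ 2 - 1) * (l ^ 2 + (l ^ 2 - 1) * cos r ^ 2) /
            ((l ^ 2 - 1) * (l ^ 2 - (l ^ 2 - 1) * cos r ^ 2) ^ 2)) * sin r :=
          intervalIntegral.integral_const_mul _ _
      _ = A * (2 + 2 * (2 * l ^ 2 - 1) / (l ^ 2 - 1)) := by rw [hgval]
  -- numeric bounds
  have hAle : A ≤ 1 + 16 * s := by
    have hlog : Real.log (1 + 4 * l ^ 2) ≤ 4 * l ^ 2 := by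
      have := Real.log_le_sub_one_of_pos (show (0:ℝ) < 1 + 4 * l ^ 2 by positivity)
      linarith
    have hεl : (α - 1) * l ^ 2 = s := by linear_combination s * hls - l ^ 2 * hs2
    have h1 : Real.log (1 + 4 * l ^ 2) * (α - 1) ≤ 4 * s := by
      calc Real.log (1 + 4 * l ^ 2) * (α - 1) ≤ 4 * l ^ 2 * (α - 1) :=
            mul_le_mul_of_nonneg_right hlog hε0.le
        _ = 4 * s := by linear_combination 4 * hεl
    have hexp2 : Real.exp 2 < 8 := by
      have h9 := Real.exp_one_lt_d9
      have h2 : Real.exp 2 = Real.exp 1 * Real.exp 1 := by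
        rw [← Real.exp_add]; norm_num
      nlinarith [Real.exp_pos 1]
    have hconv := convexOn_exp.2 (Set.mem_univ (0:ℝ)) (Set.mem_univ (2:ℝ))
        (show (0:ℝ) ≤ 1 - 4 * s / 2 by linarith) (show (0:ℝ) ≤ 4 * s / 2 by linarith)
        (show (1 - 4 * s / 2) + 4 * s / 2 = 1 by ring)
    simp only [smul_eq_mul, mul_zero, zero_add, Real.exp_zero, mul_one] at hconv
    have h42 : 4 * s / 2 * 2 = 4 * s := by ring
    rw [h42] at hconv
    have hexp4s : Real.exp (4 * s) ≤ 1 + 16 * s := by nlinarith [hs0]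
    calc A = Real.exp (Real.log (1 + 4 * l ^ 2) * (α - 1)) := by
          rw [hAdef, rpow_def_of_pos (by positivity)]
      _ ≤ Real.exp (4 * s) := Real.exp_le_exp.mpr h1
      _ ≤ 1 + 16 * s := hexp4s
  have hsum : 2 + 2 * (2 * l ^ 2 - 1) / (l ^ 2 - 1) ≤ 6 + 4 * s := by
    have h1 : 2 * (2 * l ^ 2 - 1) / (l ^ 2 - 1) = 4 + 2 / (l ^ 2 - 1) := by
      field_simp; ring
    have h2 : 2 / (l ^ 2 - 1) ≤ 4 * s := by
      rw [div_le_iff₀ hk0]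
      nlinarith [hls]
    linarith
  have hsum0 : 0 ≤ 2 + 2 * (2 * l ^ 2 - 1) / (l ^ 2 - 1) := by
    have h0 : 0 ≤ 2 * (2 * l ^ 2 - 1) / (l ^ 2 - 1) :=
      div_nonneg (by nlinarith) hk0.le
    linarith
  have hfinal : A * (2 + 2 * (2 * l ^ 2 - 1) / (l ^ 2 - 1)) ≤ 6 + 132 * s := by
    calc A * (2 + 2 * (2 * l ^ 2 - 1) / (l ^ 2 - 1)) ≤ (1 + 16 * s) * (6 + 4 * s) :=
          mul_le_mul hAle hsum hsum0 (by linarith)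
      _ ≤ 6 + 132 * s := by nlinarith [hs2, hshalf, hs0]
  -- final assembly
  have h2α : (0:ℝ) < (2:ℝ) ^ α := rpow_pos_of_pos (by norm_num) α
  have h2α4 : (2:ℝ) ^ α < 4 := by
    have h1 : (2:ℝ) ^ α < (2:ℝ) ^ (2:ℝ) :=
      rpow_lt_rpow_of_exponent_lt (by norm_num) (by linarith)
    have h2 : (2:ℝ) ^ (2:ℝ) = 4 := by
      rw [show (2:ℝ) ^ (2:ℝ) = (2:ℝ) ^ ((2:ℕ):ℝ) by norm_num, Real.rpow_natCast]
      norm_num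
    linarith
  have h6α : 6 * ((2:ℝ) ^ α * π) < (6:ℝ) ^ α * (2 * π) := by
    have h63 : (6:ℝ) ^ α = (2:ℝ) ^ α * (3:ℝ) ^ α := by
      rw [show (6:ℝ) = 2 * 3 by norm_num, Real.mul_rpow (by norm_num) (by norm_num)]
    have h3 : (3:ℝ) < (3:ℝ) ^ α := by
      have := rpow_lt_rpow_of_exponent_lt (show (1:ℝ) < 3 by norm_num) hα1
      rwa [rpow_one] at this
    rw [h63]
    nlinarith [mul_lt_mul_of_pos_right h3 (mul_pos h2α pi_pos)]
  have hπ : π < 3.15 := pi_lt_d2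
  have hp : (2:ℝ) ^ α * π < 13 := by nlinarith [pi_pos, h2α]
  calc (2:ℝ) ^ α * π * (∫ r in (0:ℝ)..π,
        (1 + 2 * l ^ 2 * (1 + cos r ^ 2) / (l ^ 2 - (l ^ 2 - 1) * cos r ^ 2) ^ 2) ^ α * sin r)
      ≤ (2:ℝ) ^ α * π * (6 + 132 * s) := by
        apply mul_le_mul_of_nonneg_left (le_trans hIle hfinal) (by positivity)
    _ < 6 ^ α * (2 * π) + 3000 * s := by
        nlinarith [h6α, mul_lt_mul_of_pos_right hp hs0, hs0]
end
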